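/- arXiv:1703.02748 — 7 statements merged into one kernel-verified Lean document; each statement's English description precedes it below -/
import Mathlib

section
/- Let G be an n-vertex d-regular multigraph with d ≥ 2 and n ≥ 4. If λ2(G) < d − d/6 − d/(2(n−3)), then κ(G) ≥ 2. -/
open Matrix Finset BigOperators

/-- Ascending list of the real roots (with multiplicity) of the characteristic
polynomial of a square real matrix.  For a matrix all of whose eigenvalues are
real, this is the list of eigenvalues in increasing order. -/
noncomputable def eigList {n : ℕ} (A : Matrix (Fin n) (Fin n) ℝ) : List ℝ :=
  A.charpoly.roots.sort (· ≤ ·)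

/-- The second-largest eigenvalue (counted with multiplicity) of a square real
matrix with real spectrum. -/
noncomputable def lambda2 {n : ℕ} (A : Matrix (Fin n) (Fin n) ℝ) : ℝ :=
  (eigList A).getD (n - 2) 0

/-- The underlying simple graph of a multigraph given by its adjacency matrix:
two distinct vertices are adjacent iff they are joined by at least one edge. -/
def toSimple {n : ℕ} (A : Matrix (Fin n) (Fin n) ℕ) : SimpleGraph (Fin n) :=
  SimpleGraph.fromRel (fun i j => 0 < A i j)

/-- Vertex connectivity of a multigraph: the least size of a set of vertices
whose deletion disconnects the graph or reduces it to a single vertex. -/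
noncomputable def kappa {n : ℕ} (A : Matrix (Fin n) (Fin n) ℕ) : ℕ :=
  sInf {k | ∃ S : Finset (Fin n), S.card = k ∧
    (¬ ((toSimple A).induce (↑(Sᶜ) : Set (Fin n))).Connected ∨ (Sᶜ).card = 1)}

/-- Vertex connectivity of a simple graph: the least size of a set of vertices
whose deletion disconnects the graph or reduces it to a single vertex. -/
noncomputable def kappaG {n : ℕ} (G : SimpleGraph (Fin n)) : ℕ :=
  sInf {k | ∃ S : Finset (Fin n), S.card = k ∧
    (¬ (G.induce (↑(Sᶜ) : Set (Fin n))).Connected ∨ (Sᶜ).card = 1)}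

/-- Edge connectivity of a multigraph: the least number of edges (counted with
multiplicity) whose deletion disconnects the graph.  A deleted edge multiset is
encoded by a symmetric matrix `B ≤ A`; it has `k` edges when `∑ᵢⱼ Bᵢⱼ = 2k`. -/
noncomputable def edgeConn {n : ℕ} (A : Matrix (Fin n) (Fin n) ℕ) : ℕ :=
  sInf {k | ∃ B : Matrix (Fin n) (Fin n) ℕ,
    (∀ i j, B i j ≤ A i j) ∧ (∀ i j, B i j = B j i) ∧
    (∑ i, ∑ j, B i j) = 2 * k ∧ ¬ (toSimple (A - B)).Connected}

/-- The quotient matrix `Q(d,n)` from the paper. -/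
noncomputable def Qmat (d n : ℝ) : Matrix (Fin 4) (Fin 4) ℝ :=
  !![(d+1)/2, (d-1)/2, 0, 0;
     d-1, 0, 1, 0;
     0, 1, 0, d-1;
     0, 0, (d-1)/(n-4), d-(d-1)/(n-4)]

/-- `ρ(d,n)`: the second-largest eigenvalue of `Q(d,n)`. -/
noncomputable def rho (d n : ℝ) : ℝ := lambda2 (Qmat d n)

/-- Delete one copy of the edge joining `u` and `v` from a multigraph. -/
def deleteEdge {n : ℕ} (A : Matrix (Fin n) (Fin n) ℕ) (u v : Fin n) :
    Matrix (Fin n) (Fin n) ℕ :=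
  Matrix.of fun i j => A i j - (if (i = u ∧ j = v) ∨ (i = v ∧ j = u) then 1 else 0)

section AuxProofs
open Polynomial

lemma sorted_second (y : ℝ) : ∀ (l : List ℝ), l.Pairwise (· ≤ ·) → 2 ≤ l.length →
    2 ≤ (l.filter (fun z => y ≤ z)).length → y ≤ l.getD (l.length - 2) 0 := by
  intro l
  induction l with
  | nil => intro _ h; simp at h
  | cons a t ih =>
    intro hs hlen hfil
    match t, hlen with
    | [b], _ =>
      -- l = [a, b], getD 0 = a
      simp only [List.length_cons, List.length_singleton] at *
      have : (List.filter (fun z => decide (y ≤ z)) [a, b]).length ≤ 2 := by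
        have := List.length_filter_le (fun z => decide (y ≤ z)) [a, b]
        simpa using this
      -- both must pass the filter
      by_cases hy : y ≤ a
      · simpa using hy
      · exfalso
        have : List.filter (fun z => decide (y ≤ z)) [a, b] =
            List.filter (fun z => decide (y ≤ z)) [b] := by
          simp [List.filter, hy]
        rw [this] at hfil
        have := List.length_filter_le (fun z => decide (y ≤ z)) [b]
        simp at this
        omega
    | (b :: c :: t'), _ =>
      set t := b :: c :: t' with ht
      have htlen : 2 ≤ t.length := by simp [ht]
      have hst : t.Pairwise (· ≤ ·) := hs.of_cons
      have hgd : (a :: t).getD ((a :: t).length - 2) 0 = t.getD (t.length - 2) 0 := by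
        have : (a :: t).length - 2 = (t.length - 2) + 1 := by
          simp only [List.length_cons]; omega
        rw [this]
        simp
      rw [hgd]
      apply ih hst htlen
      by_cases hy : y ≤ a
      · have hall : ∀ z ∈ t, y ≤ z := fun z hz => le_trans hy ((List.pairwise_cons.mp hs).1 z hz)
        have : t.filter (fun z => y ≤ z) = t := List.filter_eq_self.mpr (by
          intro z hz; simpa using hall z hz)
        rw [this]; exact htlen
      · have : (a :: t).filter (fun z => decide (y ≤ z)) = t.filter (fun z => decide (y ≤ z)) := by
          simp [List.filter, hy]
        rw [this] at hfil; exact hfil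

lemma charpoly_unitary_conj {n : ℕ} (U B : Matrix (Fin n) (Fin n) ℝ)
    (hU : U ∈ Matrix.unitaryGroup (Fin n) ℝ) :
    (U * B * star U).charpoly = B.charpoly := by
  classical
  have h1 : U * star U = 1 := (Matrix.mem_unitaryGroup_iff).mp hU
  have h2 : star U * U = 1 := (Matrix.mem_unitaryGroup_iff').mp hU
  have hmap : ∀ M N : Matrix (Fin n) (Fin n) ℝ,
      (C : ℝ →+* ℝ[X]).mapMatrix (M * N) = (C : ℝ →+* ℝ[X]).mapMatrix M * (C : ℝ →+* ℝ[X]).mapMatrix N :=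
    fun M N => map_mul _ M N
  have hc : charmatrix (U * B * star U) =
      (C : ℝ →+* ℝ[X]).mapMatrix U * charmatrix B * (C : ℝ →+* ℝ[X]).mapMatrix (star U) := by
    unfold charmatrix
    rw [mul_sub, sub_mul, hmap, hmap]
    congr 1
    have := (Matrix.scalar_commute (n := Fin n) (X : ℝ[X]) (fun r' => Commute.all _ _)
      ((C : ℝ →+* ℝ[X]).mapMatrix U)).eq
    rw [← this, mul_assoc, ← hmap, h1]
    simp
  rw [Matrix.charpoly, hc, det_mul, det_mul, mul_comm, ← mul_assoc, ← det_mul, ← hmap, h2]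
  simp [Matrix.charpoly]

lemma charpoly_diagonal_real {n : ℕ} (v : Fin n → ℝ) :
    (Matrix.diagonal v).charpoly = ∏ i, (X - C (v i)) := by
  classical
  have : charmatrix (Matrix.diagonal v) = Matrix.diagonal (fun i => X - C (v i)) := by
    ext i j
    by_cases h : i = j
    · subst h; simp [charmatrix_apply]
    · simp [charmatrix_apply, Matrix.diagonal_apply_ne _ h, h]
  rw [Matrix.charpoly, this, det_diagonal]

lemma charpoly_eq_prod_eigs {n : ℕ} {A : Matrix (Fin n) (Fin n) ℝ} (hA : A.IsHermitian) :
    A.charpoly = ∏ i, (X - C (hA.eigenvalues i)) := by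
  classical
  have hspec := hA.spectral_theorem
  have : A.charpoly = (Matrix.diagonal ((RCLike.ofReal : ℝ → ℝ) ∘ hA.eigenvalues)).charpoly := by
    conv_lhs => rw [hspec]
    exact charpoly_unitary_conj _ _ (hA.eigenvectorUnitary).2
  rw [this]
  simp only [RCLike.ofReal_real_eq_id, Function.id_comp]
  exact charpoly_diagonal_real _

lemma roots_charpoly_eq {n : ℕ} {A : Matrix (Fin n) (Fin n) ℝ} (hA : A.IsHermitian) :
    A.charpoly.roots = Finset.univ.val.map hA.eigenvalues := by
  rw [charpoly_eq_prod_eigs hA]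
  rw [← Polynomial.roots_multiset_prod_X_sub_C (Finset.univ.val.map hA.eigenvalues)]
  congr 1
  rw [Multiset.map_map]
  rfl

lemma le_lambda2_of_two {n : ℕ} (hn : 2 ≤ n) {A : Matrix (Fin n) (Fin n) ℝ}
    (hA : A.IsHermitian) (y : ℝ) (i j : Fin n) (hij : i ≠ j)
    (hi : y ≤ hA.eigenvalues i) (hj : y ≤ hA.eigenvalues j) :
    y ≤ lambda2 A := by
  classical
  set l := eigList A with hl
  have hcoe : (l : Multiset ℝ) = A.charpoly.roots := Multiset.sort_eq _ _
  have hlen : l.length = n := by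
    have : Multiset.card (l : Multiset ℝ) = n := by
      rw [hcoe, roots_charpoly_eq hA]; simp
    simpa using this
  have hsort : l.Pairwise (· ≤ ·) := Multiset.pairwise_sort _ _
  have hfil : 2 ≤ (l.filter (fun z => y ≤ z)).length := by
    have h1 : (({i, j} : Finset (Fin n)).val.map hA.eigenvalues) ≤
        Multiset.filter (fun z => y ≤ z) (l : Multiset ℝ) := by
      rw [hcoe, roots_charpoly_eq hA]
      have hle : (({i, j} : Finset (Fin n)).val.map hA.eigenvalues) ≤
          Finset.univ.val.map hA.eigenvalues :=
        Multiset.map_le_map (Finset.val_le_iff_val_subset.mpr (by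
          intro x _; simp))
      have hself : (({i, j} : Finset (Fin n)).val.map hA.eigenvalues) =
          Multiset.filter (fun z => y ≤ z) (({i, j} : Finset (Fin n)).val.map hA.eigenvalues) := by
        rw [eq_comm, Multiset.filter_eq_self]
        intro z hz
        simp only [Multiset.mem_map] at hz
        obtain ⟨k, hk, rfl⟩ := hz
        simp only [Finset.mem_insert, Finset.mem_singleton, ← Finset.mem_def] at hk
        rcases hk with rfl | rfl
        · exact hi
        · exact hj
      rw [hself]
      exact Multiset.filter_le_filter _ hle
    have h2 := Multiset.card_le_card h1
    have h3 : Multiset.card (({i, j} : Finset (Fin n)).val.map hA.eigenvalues) = 2 := by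
      simp [Finset.card_insert_of_notMem, hij]
    have h4 : Multiset.card (Multiset.filter (fun z => y ≤ z) (l : Multiset ℝ)) =
        (l.filter (fun z => y ≤ z)).length := by
      simp [Multiset.filter_coe]
    omega
  have := sorted_second y l hsort (by omega) hfil
  rw [hlen] at this
  exact this


lemma eig_le_of_rowsum {n : ℕ} {A : Matrix (Fin n) (Fin n) ℝ} (hnn : ∀ i j, 0 ≤ A i j)
    {d : ℝ} (hrow : ∀ i, ∑ j, A i j = d) {μ : ℝ} {v : Fin n → ℝ} (hv : v ≠ 0)
    (heig : A *ᵥ v = μ • v) : μ ≤ d := by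
  classical
  have hne : (Finset.univ : Finset (Fin n)).Nonempty := by
    by_contra h
    apply hv
    ext k
    exact absurd (Finset.mem_univ k) (fun hk => h ⟨k, hk⟩)
  obtain ⟨i, -, hi⟩ := Finset.exists_max_image Finset.univ (fun k => |v k|) hne
  have hvi : 0 < |v i| := by
    by_contra h
    push_neg at h
    apply hv
    ext k
    have h1 := hi k (Finset.mem_univ k)
    have : |v k| = 0 := le_antisymm (le_trans h1 h) (abs_nonneg _)
    simpa using abs_eq_zero.mp this
  have hmv : μ * v i = ∑ j, A i j * v j := by
    have := congrFun heig i
    simp only [Matrix.mulVec, dotProduct, Pi.smul_apply, smul_eq_mul] at this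
    rw [← this]
  have habs : |μ| * |v i| ≤ d * |v i| := by
    calc |μ| * |v i| = |μ * v i| := (abs_mul μ (v i)).symm
    _ = |∑ j, A i j * v j| := by rw [hmv]
    _ ≤ ∑ j, |A i j * v j| := Finset.abs_sum_le_sum_abs _ _
    _ ≤ ∑ j, A i j * |v i| := by
        apply Finset.sum_le_sum
        intro j _
        rw [abs_mul, abs_of_nonneg (hnn i j)]
        exact mul_le_mul_of_nonneg_left (hi j (Finset.mem_univ j)) (hnn i j)
    _ = d * |v i| := by rw [← Finset.sum_mul, hrow]
  have := le_of_mul_le_mul_right habs hvi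
  exact le_trans (le_abs_self μ) this

lemma rayleigh_le {n : ℕ} (hn : 2 ≤ n) {A : Matrix (Fin n) (Fin n) ℝ} (hA : A.IsHermitian)
    {d : ℝ} (hnn : ∀ i j, 0 ≤ A i j) (hrow : ∀ i, ∑ j, A i j = d)
    (x : Fin n → ℝ) (hx : ∑ i, x i = 0) :
    x ⬝ᵥ (A *ᵥ x) ≤ lambda2 A * (x ⬝ᵥ x) := by
  classical
  set μ := hA.eigenvalues with hμdef
  set V : Matrix (Fin n) (Fin n) ℝ := (hA.eigenvectorUnitary : Matrix (Fin n) (Fin n) ℝ) with hVdef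
  have hstar : star V = Vᵀ := by
    ext i j; simp [Matrix.star_apply]
  have hV1 : V * Vᵀ = 1 := by
    rw [← hstar]; exact (Matrix.mem_unitaryGroup_iff).mp (hA.eigenvectorUnitary).2
  have hV2 : Vᵀ * V = 1 := by
    rw [← hstar]; exact (Matrix.mem_unitaryGroup_iff').mp (hA.eigenvectorUnitary).2
  have hco : ((RCLike.ofReal : ℝ → ℝ) ∘ μ) = μ := by
    funext k; simp [RCLike.ofReal_real_eq_id]
  have hspec : A = V * Matrix.diagonal μ * Vᵀ := by
    rw [← hstar, ← hco]
    exact hA.spectral_theorem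
  have hdotT : ∀ u w : Fin n → ℝ, (Vᵀ *ᵥ u) ⬝ᵥ (Vᵀ *ᵥ w) = u ⬝ᵥ w := by
    intro u w
    rw [Matrix.dotProduct_mulVec, Matrix.vecMul_transpose, Matrix.mulVec_mulVec, hV1,
      Matrix.one_mulVec]
  have hdotN : ∀ u w : Fin n → ℝ, (V *ᵥ u) ⬝ᵥ (V *ᵥ w) = u ⬝ᵥ w := by
    intro u w
    rw [Matrix.dotProduct_mulVec, ← Matrix.mulVec_transpose, Matrix.mulVec_mulVec, hV2,
      Matrix.one_mulVec]
  set z := Vᵀ *ᵥ x with hzdef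
  set o : Fin n → ℝ := fun _ => 1 with hodef
  set w := Vᵀ *ᵥ o with hwdef
  have hones : A *ᵥ o = fun _ => d := by
    ext k
    simp [Matrix.mulVec, dotProduct, hodef, hrow k]
  have hQ : x ⬝ᵥ (A *ᵥ x) = ∑ i, μ i * (z i * z i) := by
    conv_lhs => rw [hspec]
    rw [show (V * Matrix.diagonal μ * Vᵀ) *ᵥ x = V *ᵥ (Matrix.diagonal μ *ᵥ (Vᵀ *ᵥ x)) by
      rw [Matrix.mulVec_mulVec, Matrix.mulVec_mulVec]]
    rw [Matrix.dotProduct_mulVec, ← Matrix.mulVec_transpose]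
    rw [← hzdef, dotProduct]
    apply Finset.sum_congr rfl
    intro i _
    rw [Matrix.mulVec_diagonal]
    ring
  have hXX : x ⬝ᵥ x = ∑ i, z i * z i := by
    rw [← hdotT x x, ← hzdef, dotProduct]
  have hDw : ∀ i, μ i * w i = d * w i := by
    have key : Matrix.diagonal μ *ᵥ w = fun i => d * w i := by
      have h1 : Matrix.diagonal μ *ᵥ w = Vᵀ *ᵥ (A *ᵥ o) := by
        rw [hspec, hwdef, Matrix.mulVec_mulVec, Matrix.mulVec_mulVec]
        congr 1
        rw [← mul_assoc, ← mul_assoc, hV2, one_mul]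
      have h2 : (fun _ => d : Fin n → ℝ) = d • o := by
        funext k; simp [hodef]
      rw [h1, hones, h2, Matrix.mulVec_smul]
      funext k
      simp [hwdef]
    intro i
    have := congrFun key i
    rwa [Matrix.mulVec_diagonal] at this
  have hwz : ∑ i, w i * z i = 0 := by
    have h1 : w ⬝ᵥ z = o ⬝ᵥ x := hdotT o x
    have h2 : o ⬝ᵥ x = 0 := by simpa [dotProduct, hodef] using hx
    simpa [dotProduct] using h1.trans h2
  have hwn : ∑ i, w i * w i = (n : ℝ) := by
    have h1 : w ⬝ᵥ w = o ⬝ᵥ o := hdotT o o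
    have h2 : o ⬝ᵥ o = (n : ℝ) := by simp [dotProduct, hodef]
    simpa [dotProduct] using h1.trans h2
  have hμd : ∀ i, μ i ≤ d := by
    intro i
    have hsingle : Matrix.diagonal μ *ᵥ (Pi.single i 1 : Fin n → ℝ) = μ i • (Pi.single i 1 : Fin n → ℝ) := by
      rw [Matrix.diagonal_mulVec_single]
      funext k
      by_cases hk : k = i
      · subst hk; simp
      · simp [Pi.single_apply, hk]
    have heig : A *ᵥ (V *ᵥ Pi.single i 1) = μ i • (V *ᵥ Pi.single i 1) := by
      rw [hspec, Matrix.mulVec_mulVec,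
        mul_assoc (V * Matrix.diagonal μ) Vᵀ V, hV2, mul_one,
        ← Matrix.mulVec_mulVec, hsingle, Matrix.mulVec_smul]
    have hvnz : (V *ᵥ Pi.single i 1) ≠ 0 := by
      intro h
      have := hdotN (Pi.single i 1) (Pi.single i 1)
      rw [h] at this
      simp [dotProduct, Pi.single_apply] at this
    exact eig_le_of_rowsum hnn hrow hvnz heig
  have hex0 : ∃ i0, w i0 ≠ 0 := by
    by_contra h
    push_neg at h
    have hz : (n : ℝ) = 0 := by
      rw [← hwn]
      apply Finset.sum_eq_zero
      intro i _
      rw [h i, mul_zero]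
    have : n = 0 := Nat.cast_eq_zero.mp hz
    omega
  obtain ⟨i0, hw0⟩ := hex0
  have hmu0 : μ i0 = d := mul_right_cancel₀ hw0 (hDw i0)
  by_cases hex : ∃ j, j ≠ i0 ∧ μ j = d
  · obtain ⟨j, hj, hjd⟩ := hex
    have hl2 : d ≤ lambda2 A :=
      le_lambda2_of_two hn hA d j i0 hj (le_of_eq hjd.symm) (le_of_eq hmu0.symm)
    rw [hQ, hXX, Finset.mul_sum]
    apply Finset.sum_le_sum
    intro i _
    have h1 : μ i * (z i * z i) ≤ d * (z i * z i) :=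
      mul_le_mul_of_nonneg_right (hμd i) (mul_self_nonneg _)
    exact le_trans h1 (mul_le_mul_of_nonneg_right hl2 (mul_self_nonneg _))
  · push_neg at hex
    have hz0 : z i0 = 0 := by
      have hwj : ∀ j, j ≠ i0 → w j = 0 := by
        intro j hj
        by_contra hwj0
        exact hex j hj (mul_right_cancel₀ hwj0 (hDw j))
      have hsum : ∑ i, w i * z i = w i0 * z i0 :=
        Finset.sum_eq_single i0 (fun j _ hj => by rw [hwj j hj]; ring)
          (fun h => absurd (Finset.mem_univ i0) h)
      rw [hsum] at hwz
      rcases mul_eq_zero.mp hwz with h | h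
      · exact absurd h hw0
      · exact h
    have hle : ∀ i, i ≠ i0 → μ i ≤ lambda2 A := fun i hi =>
      le_lambda2_of_two hn hA (μ i) i i0 hi le_rfl (by
        show μ i ≤ μ i0
        rw [hmu0]; exact hμd i)
    rw [hQ, hXX, Finset.mul_sum]
    apply Finset.sum_le_sum
    intro i _
    by_cases hii : i = i0
    · subst hii
      rw [hz0]
      simp
    · exact mul_le_mul_of_nonneg_right (hle i hii) (mul_self_nonneg _)


set_option maxHeartbeats 2000000 in
lemma core_bound {n d : ℕ} (hd : 2 ≤ d) (hn : 4 ≤ n)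
    (A : Matrix (Fin n) (Fin n) ℕ)
    (hsym : ∀ i j, A i j = A j i) (hdiag : ∀ i, A i i = 0)
    (hreg : ∀ i, ∑ j, A i j = d)
    (U W : Finset (Fin n)) (hUW : Disjoint U W) (hUne : U.Nonempty) (hWne : W.Nonempty)
    (hno : ∀ i ∈ U, ∀ j ∈ W, A i j = 0)
    (hR : ((U ∪ W)ᶜ).card ≤ 1)
    (hsz : ((U ∪ W)ᶜ).card = 1 → 2 ≤ U.card ∧ 2 ≤ W.card) :
    (d : ℝ) - (d : ℝ)/6 - (d : ℝ)/(2*((n:ℝ)-3)) ≤ lambda2 (A.map (fun x => (x : ℝ))) := by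
  classical
  set B : Matrix (Fin n) (Fin n) ℝ := A.map (fun x => (x : ℝ)) with hBdef
  have hBapp : ∀ i j, B i j = (A i j : ℝ) := fun i j => rfl
  have hBsym : ∀ i j, B i j = B j i := fun i j => by rw [hBapp, hBapp, hsym]
  have hBnn : ∀ i j, 0 ≤ B i j := fun i j => by rw [hBapp]; positivity
  have hBrow : ∀ i, ∑ j, B i j = (d : ℝ) := fun i => by
    rw [show ∑ j, B i j = ((∑ j, A i j : ℕ) : ℝ) by push_cast [hBapp]; rfl, hreg]
  have hHerm : B.IsHermitian := by
    rw [Matrix.IsHermitian]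
    ext i j
    rw [Matrix.conjTranspose_apply]
    simp [hBsym i j]
  have hn2 : 2 ≤ n := by omega
  have hd0 : (0:ℝ) < d := by exact_mod_cast Nat.lt_of_lt_of_le (by norm_num) hd

  have hn3 : (0:ℝ) < (n:ℝ) - 3 := by
    have : (4:ℝ) ≤ (n:ℝ) := by exact_mod_cast hn
    linarith
  have hKnn : (0:ℝ) ≤ (d:ℝ)/6 + (d:ℝ)/(2*((n:ℝ)-3)) := by positivity
  interval_cases hcase : ((U ∪ W)ᶜ).card
  · -- R empty
    have hc0 : (U ∪ W)ᶜ = ∅ := Finset.card_eq_zero.mp hcase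
    have huniv : U ∪ W = Finset.univ := by
      rwa [Finset.compl_eq_empty_iff] at hc0
    set s : ℝ := (U.card : ℝ) with hsdef
    set t : ℝ := (W.card : ℝ) with htdef
    have hpart : ∀ f : Fin n → ℝ, ∑ i, f i = (∑ i ∈ U, f i) + (∑ i ∈ W, f i) := by
      intro f
      rw [← Finset.sum_union hUW, huniv]
    set x : Fin n → ℝ := fun i => if i ∈ U then t else -s with hxdef
    have hxU : ∀ i ∈ U, x i = t := fun i hi => if_pos hi
    have hxW : ∀ i ∈ W, x i = -s := fun i hi =>
      if_neg (Finset.disjoint_right.mp hUW hi)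
    have hcardU : ∑ _i ∈ U, (1:ℝ) = s := by rw [Finset.sum_const, nsmul_eq_mul, mul_one, hsdef]
    have hcardW : ∑ _i ∈ W, (1:ℝ) = t := by rw [Finset.sum_const, nsmul_eq_mul, mul_one, htdef]
    have hsx : ∑ i, x i = 0 := by
      have e1 : ∑ i ∈ U, x i = ∑ i ∈ U, t := Finset.sum_congr rfl hxU
      have e2 : ∑ i ∈ W, x i = ∑ i ∈ W, -s := Finset.sum_congr rfl hxW
      rw [hpart x, e1, e2, Finset.sum_const, Finset.sum_const, nsmul_eq_mul, nsmul_eq_mul,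
        ← hsdef, ← htdef]
      ring
    have hzero : ∀ i ∈ U, ∀ j ∈ W, B i j = 0 := by
      intro i hi j hj
      rw [hBapp, hno i hi j hj, Nat.cast_zero]
    have hBx : ∀ i, (B *ᵥ x) i = d * x i := by
      intro i
      show ∑ j, B i j * x j = d * x i
      rcases (by
        have := Finset.mem_univ i
        rw [← huniv, Finset.mem_union] at this
        exact this : i ∈ U ∨ i ∈ W) with hi | hi
      · have e0 : ∑ j ∈ W, B i j * x j = ∑ j ∈ W, (0:ℝ) :=
          Finset.sum_congr rfl (fun j hj => by rw [hzero i hi j hj, zero_mul])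
        have e1 : ∑ j ∈ W, B i j = ∑ j ∈ W, (0:ℝ) :=
          Finset.sum_congr rfl (fun j hj => hzero i hi j hj)
        have hrowU : ∑ j ∈ U, B i j = d := by
          have h1 := hBrow i
          rw [hpart (fun j => B i j), e1, Finset.sum_const, smul_zero, add_zero] at h1
          exact h1
        have e2 : ∑ j ∈ U, B i j * x j = ∑ j ∈ U, B i j * t :=
          Finset.sum_congr rfl (fun j hj => by rw [hxU j hj])
        rw [hpart (fun j => B i j * x j), e0, Finset.sum_const, smul_zero, add_zero, e2,
          ← Finset.sum_mul, hrowU, hxU i hi]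
      · have e0 : ∑ j ∈ U, B i j * x j = ∑ j ∈ U, (0:ℝ) :=
          Finset.sum_congr rfl (fun j hj => by rw [hBsym, hzero j hj i hi, zero_mul])
        have e1 : ∑ j ∈ U, B i j = ∑ j ∈ U, (0:ℝ) :=
          Finset.sum_congr rfl (fun j hj => by rw [hBsym, hzero j hj i hi])
        have hrowW : ∑ j ∈ W, B i j = d := by
          have h1 := hBrow i
          rw [hpart (fun j => B i j), e1, Finset.sum_const, smul_zero, zero_add] at h1
          exact h1
        have e2 : ∑ j ∈ W, B i j * x j = ∑ j ∈ W, B i j * -s :=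
          Finset.sum_congr rfl (fun j hj => by rw [hxW j hj])
        rw [hpart (fun j => B i j * x j), e0, Finset.sum_const, smul_zero, zero_add, e2,
          ← Finset.sum_mul, hrowW, hxW i hi]
    have hxx_pos : 0 < x ⬝ᵥ x := by
      obtain ⟨u0, hu0⟩ := hUne
      have ht1 : (1:ℝ) ≤ t := by
        rw [htdef]
        exact_mod_cast Finset.card_pos.mpr hWne
      apply Finset.sum_pos' (fun i _ => mul_self_nonneg (x i))
      refine ⟨u0, Finset.mem_univ u0, ?_⟩
      rw [hxU u0 hu0]
      exact mul_pos (by linarith) (by linarith)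
    have hQ : x ⬝ᵥ (B *ᵥ x) = d * (x ⬝ᵥ x) := by
      show ∑ i, x i * (B *ᵥ x) i = d * ∑ i, x i * x i
      have e1 : ∀ i ∈ Finset.univ, x i * (B *ᵥ x) i = (d:ℝ) * (x i * x i) := by
        intro i _
        rw [hBx i]
        ring
      rw [Finset.sum_congr rfl e1, ← Finset.mul_sum]
    have hray := rayleigh_le hn2 hHerm hBnn hBrow x hsx
    rw [hQ] at hray
    have hdle : (d:ℝ) ≤ lambda2 B := le_of_mul_le_mul_right hray hxx_pos
    have h6 : (0:ℝ) ≤ (d:ℝ)/6 := by positivity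
    have h7 : (0:ℝ) ≤ (d:ℝ)/(2*((n:ℝ)-3)) := by positivity
    linarith
  · -- R = {v}
    obtain ⟨v, hv⟩ := Finset.card_eq_one.mp hcase
    obtain ⟨hU2, hW2⟩ := hsz rfl
    have hvnot : v ∉ U ∧ v ∉ W := by
      have hvmem : v ∈ (U ∪ W)ᶜ := by rw [hv]; exact Finset.mem_singleton_self v
      rw [Finset.mem_compl, Finset.mem_union] at hvmem
      push_neg at hvmem
      exact hvmem
    have huniv3 : ∀ i, i ∈ U ∨ i ∈ W ∨ i = v := by
      intro i
      by_cases h1 : i ∈ U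
      · exact Or.inl h1
      by_cases h2 : i ∈ W
      · exact Or.inr (Or.inl h2)
      right; right
      have : i ∈ (U ∪ W)ᶜ := by
        rw [Finset.mem_compl, Finset.mem_union]
        push_neg
        exact ⟨h1, h2⟩
      rw [hv, Finset.mem_singleton] at this
      exact this
    have hdisj2 : Disjoint (U ∪ W) ({v} : Finset (Fin n)) := by
      rw [Finset.disjoint_singleton_right, Finset.mem_union]
      push_neg
      exact hvnot
    have huniv' : (U ∪ W) ∪ {v} = Finset.univ := by
      apply Finset.eq_univ_iff_forall.mpr
      intro i
      rw [Finset.mem_union, Finset.mem_union, Finset.mem_singleton]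
      rcases huniv3 i with h | h | h
      · exact Or.inl (Or.inl h)
      · exact Or.inl (Or.inr h)
      · exact Or.inr h
    have hpart : ∀ f : Fin n → ℝ, ∑ i, f i = (∑ i ∈ U, f i) + (∑ i ∈ W, f i) + f v := by
      intro f
      rw [← huniv', Finset.sum_union hdisj2, Finset.sum_union hUW, Finset.sum_singleton]
    set s : ℝ := (U.card : ℝ) with hsdef
    set t : ℝ := (W.card : ℝ) with htdef
    have hs2 : (2:ℝ) ≤ s := by rw [hsdef]; exact_mod_cast hU2
    have ht2 : (2:ℝ) ≤ t := by rw [htdef]; exact_mod_cast hW2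
    have hcardn : s + t + 1 = (n:ℝ) := by
      have h1 : (U ∪ W).card + ((U ∪ W)ᶜ).card = n := by
        rw [Finset.card_add_card_compl]
        exact Fintype.card_fin n
      rw [Finset.card_union_of_disjoint hUW, hcase] at h1
      rw [hsdef, htdef]
      exact_mod_cast h1
    set b : ℝ := ∑ i ∈ U, B i v with hbdef
    set c : ℝ := ∑ i ∈ W, B i v with hcdef
    set γ : ℝ := (b*t - c*s)/d with hγdef
    have hdγ : (d:ℝ) * γ = b*t - c*s := by
      rw [hγdef]
      field_simp
    have hbnn : (0:ℝ) ≤ b := Finset.sum_nonneg (fun i _ => hBnn i v)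
    have hcnn : (0:ℝ) ≤ c := Finset.sum_nonneg (fun i _ => hBnn i v)
    have hzero : ∀ i ∈ U, ∀ j ∈ W, B i j = 0 := by
      intro i hi j hj
      rw [hBapp, hno i hi j hj, Nat.cast_zero]
    have hBvv : B v v = 0 := by rw [hBapp, hdiag, Nat.cast_zero]
    have hbU : ∑ j ∈ U, B v j = b := by
      rw [hbdef]
      exact Finset.sum_congr rfl (fun j _ => hBsym v j)
    have hcW : ∑ j ∈ W, B v j = c := by
      rw [hcdef]
      exact Finset.sum_congr rfl (fun j _ => hBsym v j)
    have hbc : b + c = (d:ℝ) := by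
      have h1 := hBrow v
      rw [hpart (fun j => B v j), hbU, hcW, hBvv, add_zero] at h1
      exact h1
    have hrowsplit : ∀ i, (∑ j ∈ U, B i j) + (∑ j ∈ W, B i j) + B i v = d := by
      intro i
      have h1 := hBrow i
      rwa [hpart (fun j => B i j)] at h1
    set x : Fin n → ℝ := fun i => if i ∈ U then t else if i ∈ W then -s else γ with hxdef
    have hxU : ∀ i ∈ U, x i = t := fun i hi => if_pos hi
    have hxW : ∀ i ∈ W, x i = -s := by
      intro i hi
      show (if i ∈ U then t else if i ∈ W then -s else γ) = -s
      rw [if_neg (Finset.disjoint_right.mp hUW hi), if_pos hi]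
    have hxv : x v = γ := by
      show (if v ∈ U then t else if v ∈ W then -s else γ) = γ
      rw [if_neg hvnot.1, if_neg hvnot.2]
    have hsx : ∑ i, x i = γ := by
      have e1 : ∑ i ∈ U, x i = ∑ i ∈ U, t := Finset.sum_congr rfl hxU
      have e2 : ∑ i ∈ W, x i = ∑ i ∈ W, -s := Finset.sum_congr rfl hxW
      rw [hpart x, e1, e2, Finset.sum_const, Finset.sum_const, nsmul_eq_mul, nsmul_eq_mul,
        hxv, ← hsdef, ← htdef]
      ring
    have hBx : ∀ i, (B *ᵥ x) i = t * (∑ j ∈ U, B i j) - s * (∑ j ∈ W, B i j) + γ * B i v := by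
      intro i
      show ∑ j, B i j * x j = _
      have e1 : ∑ j ∈ U, B i j * x j = ∑ j ∈ U, B i j * t :=
        Finset.sum_congr rfl (fun j hj => by rw [hxU j hj])
      have e2 : ∑ j ∈ W, B i j * x j = ∑ j ∈ W, B i j * -s :=
        Finset.sum_congr rfl (fun j hj => by rw [hxW j hj])
      rw [hpart (fun j => B i j * x j), e1, e2, hxv, ← Finset.sum_mul, ← Finset.sum_mul]
      ring
    have hUWzero : ∀ i ∈ U, ∑ j ∈ W, B i j = 0 := by
      intro i hi
      have e1 : ∑ j ∈ W, B i j = ∑ j ∈ W, (0:ℝ) :=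
        Finset.sum_congr rfl (fun j hj => hzero i hi j hj)
      rw [e1, Finset.sum_const, smul_zero]
    have hWUzero : ∀ i ∈ W, ∑ j ∈ U, B i j = 0 := by
      intro i hi
      have e1 : ∑ j ∈ U, B i j = ∑ j ∈ U, (0:ℝ) :=
        Finset.sum_congr rfl (fun j hj => by rw [hBsym, hzero j hj i hi])
      rw [e1, Finset.sum_const, smul_zero]
    have hBxU : ∀ i ∈ U, (B *ᵥ x) i = t * ((d:ℝ) - B i v) + γ * B i v := by
      intro i hi
      have h1 : ∑ j ∈ U, B i j = (d:ℝ) - B i v := by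
        have h2 := hrowsplit i
        have h3 := hUWzero i hi
        linarith
      rw [hBx i, h1, hUWzero i hi]
      ring
    have hBxW : ∀ i ∈ W, (B *ᵥ x) i = -s * ((d:ℝ) - B i v) + γ * B i v := by
      intro i hi
      have h1 : ∑ j ∈ W, B i j = (d:ℝ) - B i v := by
        have h2 := hrowsplit i
        have h3 := hWUzero i hi
        linarith
      rw [hBx i, h1, hWUzero i hi]
      ring
    have hBxv : (B *ᵥ x) v = d * γ := by
      rw [hBx v, hbU, hcW, hBvv]
      linear_combination -hdγ
    have hsumBU : ∑ i ∈ U, B i v = b := hbdef.symm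
    have hsumBW : ∑ i ∈ W, B i v = c := hcdef.symm
    have hQ : x ⬝ᵥ (B *ᵥ x) = t^2*((d:ℝ)*s - b) + t*γ*b + (s^2*((d:ℝ)*t - c) - s*γ*c) + d*γ^2 := by
      show ∑ i, x i * (B *ᵥ x) i = _
      have eU : ∑ i ∈ U, x i * (B *ᵥ x) i = t^2*((d:ℝ)*s - b) + t*γ*b := by
        have e1 : ∑ i ∈ U, x i * (B *ᵥ x) i
            = ∑ i ∈ U, (t^2*(d:ℝ) + (t*γ - t^2) * B i v) := by
          apply Finset.sum_congr rfl
          intro i hi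
          rw [hxU i hi, hBxU i hi]
          ring
        rw [e1, Finset.sum_add_distrib, Finset.sum_const, ← Finset.mul_sum, hsumBU,
          nsmul_eq_mul, ← hsdef]
        ring
      have eW : ∑ i ∈ W, x i * (B *ᵥ x) i = s^2*((d:ℝ)*t - c) - s*γ*c := by
        have e1 : ∑ i ∈ W, x i * (B *ᵥ x) i
            = ∑ i ∈ W, (s^2*(d:ℝ) + (-s*γ - s^2) * B i v) := by
          apply Finset.sum_congr rfl
          intro i hi
          rw [hxW i hi, hBxW i hi]
          ring
        rw [e1, Finset.sum_add_distrib, Finset.sum_const, ← Finset.mul_sum, hsumBW,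
          nsmul_eq_mul, ← htdef]
        ring
      rw [hpart (fun i => x i * (B *ᵥ x) i), eU, eW, hxv, hBxv]
      ring
    have hxx : x ⬝ᵥ x = s*t^2 + t*s^2 + γ^2 := by
      show ∑ i, x i * x i = _
      have e1 : ∑ i ∈ U, x i * x i = ∑ i ∈ U, t * t :=
        Finset.sum_congr rfl (fun i hi => by rw [hxU i hi])
      have e2 : ∑ i ∈ W, x i * x i = ∑ i ∈ W, -s * -s :=
        Finset.sum_congr rfl (fun i hi => by rw [hxW i hi])
      rw [hpart (fun i => x i * x i), e1, e2, Finset.sum_const, Finset.sum_const,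
        nsmul_eq_mul, nsmul_eq_mul, hxv, ← hsdef, ← htdef]
      ring
    set m : ℝ := γ / n with hmdef
    set y : Fin n → ℝ := fun i => x i - m with hydef
    have hnR : (0:ℝ) < n := by
      have : (4:ℝ) ≤ (n:ℝ) := by exact_mod_cast hn
      linarith
    have hsy : ∑ i, y i = 0 := by
      show ∑ i, (x i - m) = 0
      rw [Finset.sum_sub_distrib, hsx, Finset.sum_const, Finset.card_univ, Fintype.card_fin,
        nsmul_eq_mul, hmdef]
      field_simp
      ring
    have hBy : ∀ i, (B *ᵥ y) i = (B *ᵥ x) i - m * d := by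
      intro i
      show ∑ j, B i j * y j = (∑ j, B i j * x j) - m * d
      have e1 : ∑ j, B i j * y j = ∑ j, (B i j * x j - B i j * m) := by
        apply Finset.sum_congr rfl
        intro j _
        show B i j * (x j - m) = _
        ring
      rw [e1, Finset.sum_sub_distrib, ← Finset.sum_mul, hBrow i]
      ring
    have hSBx : ∑ i, (B *ᵥ x) i = d * γ := by
      have eU : ∑ i ∈ U, (B *ᵥ x) i = ∑ i ∈ U, (t*(d:ℝ) + (γ - t) * B i v) := by
        apply Finset.sum_congr rfl
        intro i hi
        rw [hBxU i hi]
        ring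
      have eW : ∑ i ∈ W, (B *ᵥ x) i = ∑ i ∈ W, (-s*(d:ℝ) + (γ + s) * B i v) := by
        apply Finset.sum_congr rfl
        intro i hi
        rw [hBxW i hi]
        ring
      rw [hpart (fun i => (B *ᵥ x) i), eU, eW, hBxv, Finset.sum_add_distrib,
        Finset.sum_add_distrib, Finset.sum_const, Finset.sum_const, ← Finset.mul_sum,
        ← Finset.mul_sum, hsumBU, hsumBW, nsmul_eq_mul, nsmul_eq_mul, ← hsdef, ← htdef]
      linear_combination γ * hbc + hdγ
    have hQy : y ⬝ᵥ (B *ᵥ y) = x ⬝ᵥ (B *ᵥ x) - 2*m*((d:ℝ)*γ) + n*(m^2*(d:ℝ)) := by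
      show ∑ i, y i * (B *ᵥ y) i = (∑ i, x i * (B *ᵥ x) i) - 2*m*((d:ℝ)*γ) + n*(m^2*(d:ℝ))
      have e1 : ∑ i, y i * (B *ᵥ y) i
          = ∑ i, (x i * (B *ᵥ x) i - m * (B *ᵥ x) i - (m*(d:ℝ)) * x i + m^2*(d:ℝ)) := by
        apply Finset.sum_congr rfl
        intro i _
        rw [hBy i]
        show (x i - m) * ((B *ᵥ x) i - m * (d:ℝ)) = _
        ring
      rw [e1, Finset.sum_add_distrib, Finset.sum_sub_distrib, Finset.sum_sub_distrib,
        ← Finset.mul_sum, ← Finset.mul_sum, hSBx, hsx, Finset.sum_const, Finset.card_univ,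
        Fintype.card_fin, nsmul_eq_mul]
      try ring
    have hyy : y ⬝ᵥ y = x ⬝ᵥ x - 2*m*γ + n*m^2 := by
      show ∑ i, y i * y i = (∑ i, x i * x i) - 2*m*γ + n*m^2
      have e1 : ∑ i, y i * y i = ∑ i, (x i * x i - (2*m) * x i + m^2) := by
        apply Finset.sum_congr rfl
        intro i _
        show (x i - m) * (x i - m) = _
        ring
      rw [e1, Finset.sum_add_distrib, Finset.sum_sub_distrib, ← Finset.mul_sum, hsx,
        Finset.sum_const, Finset.card_univ, Fintype.card_fin, nsmul_eq_mul]
      try ring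
    have hray := rayleigh_le hn2 hHerm hBnn hBrow y hsy
    have hkey : (d:ℝ) * (y ⬝ᵥ y) - y ⬝ᵥ (B *ᵥ y) = b*t^2 + c*s^2 - d*γ^2 := by
      rw [hQy, hyy, hQ, hxx]
      linear_combination γ * hdγ
    have hyyval : y ⬝ᵥ y = s*t^2 + t*s^2 + γ^2 - γ^2/n := by
      rw [hyy, hxx, hmdef]
      field_simp
      ring
    have hstpos : (0:ℝ) < s*t*(s+t) := by
      have h0s : (0:ℝ) < s := by linarith
      have h0t : (0:ℝ) < t := by linarith
      have h0st : (0:ℝ) < s + t := by linarith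
      exact mul_pos (mul_pos h0s h0t) h0st
    have hyyge : s*t*(s+t) ≤ y ⬝ᵥ y := by
      rw [hyyval]
      have h1 : γ^2/n ≤ γ^2 := by
        apply div_le_self (sq_nonneg γ)
        linarith
      linarith
    have hyypos : (0:ℝ) < y ⬝ᵥ y := lt_of_lt_of_le hstpos hyyge
    have hN : (d:ℝ) * (b*t^2 + c*s^2 - d*γ^2) = b*c*(s+t)^2 := by
      linear_combination (-(b*t^2 + c*s^2)) * hbc - (b*t - c*s + (d:ℝ)*γ) * hdγ
    have hn3eq : (n:ℝ) - 3 = s + t - 2 := by linarith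
    set K : ℝ := (d:ℝ)/6 + (d:ℝ)/(2*((n:ℝ)-3)) with hKdef
    have hP : 3*(s+t)*(s+t-2) ≤ 2*s*t*(s+t-2) + 6*(s*t) := by
      have e1 : (0:ℝ) ≤ (s-2)*(t-2)*s :=
        mul_nonneg (mul_nonneg (by linarith) (by linarith)) (by linarith)
      have e2 : (0:ℝ) ≤ (s-2)*(t-2)*t :=
        mul_nonneg (mul_nonneg (by linarith) (by linarith)) (by linarith)
      have e3 : (0:ℝ) ≤ s^2*(t-1) :=
        mul_nonneg (sq_nonneg s) (by linarith)
      have e4 : (0:ℝ) ≤ t^2*(s-1) :=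
        mul_nonneg (sq_nonneg t) (by linarith)
      linarith [e1, e2, e3, e4]
    have hstep : (d:ℝ)/4 * (s+t) ≤ K * (s*t) := by
      rw [hKdef, hn3eq]
      have h2u : (0:ℝ) < s + t - 2 := by linarith
      have expand : ((d:ℝ)/6 + (d:ℝ)/(2*(s+t-2)))*(s*t) - (d:ℝ)/4*(s+t)
          = (d:ℝ) * (2*s*t*(s+t-2) + 6*(s*t) - 3*(s+t)*(s+t-2)) / (12*(s+t-2)) := by
        field_simp
        ring
      have h3 : (0:ℝ) ≤ ((d:ℝ)/6 + (d:ℝ)/(2*(s+t-2)))*(s*t) - (d:ℝ)/4*(s+t) := by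
        rw [expand]
        apply div_nonneg
        · apply mul_nonneg hd0.le
          linarith
        · linarith
      linarith
    have hbc4 : 4*(b*c) ≤ (d:ℝ)^2 := by
      have h9 : (0:ℝ) ≤ (b - c)^2 := sq_nonneg _
      have h10 : ((d:ℝ))^2 = (b+c)^2 := by rw [hbc]
      rw [h10]
      linarith
    have hNle : b*t^2 + c*s^2 - d*γ^2 ≤ K * (s*t*(s+t)) := by
      have hA1 : (b*c)*(s+t)^2 ≤ ((d:ℝ)^2/4)*(s+t)^2 :=
        mul_le_mul_of_nonneg_right (by linarith) (sq_nonneg _)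
      have hA3 : ((d:ℝ)*(s+t)) * ((d:ℝ)/4*(s+t)) ≤ ((d:ℝ)*(s+t)) * (K*(s*t)) := by
        apply mul_le_mul_of_nonneg_left hstep
        have h8 : (0:ℝ) ≤ s + t := by linarith
        exact mul_nonneg hd0.le h8
      have h5 : (d:ℝ) * (b*t^2 + c*s^2 - d*γ^2) ≤ (d:ℝ) * (K * (s*t*(s+t))) := by
        rw [hN]
        calc b*c*(s+t)^2 ≤ ((d:ℝ)^2/4)*(s+t)^2 := hA1
          _ = ((d:ℝ)*(s+t)) * ((d:ℝ)/4*(s+t)) := by ring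
          _ ≤ ((d:ℝ)*(s+t)) * (K*(s*t)) := hA3
          _ = (d:ℝ) * (K * (s*t*(s+t))) := by ring
      exact le_of_mul_le_mul_left h5 hd0
    have hfinal : ((d:ℝ) - K) * (y ⬝ᵥ y) ≤ lambda2 B * (y ⬝ᵥ y) := by
      have h6 : K * (s*t*(s+t)) ≤ K * (y ⬝ᵥ y) := mul_le_mul_of_nonneg_left hyyge hKnn
      have h8 : ((d:ℝ) - K) * (y ⬝ᵥ y) = (d:ℝ) * (y ⬝ᵥ y) - K * (y ⬝ᵥ y) := by ring
      rw [h8]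
      linarith [hray, hkey, hNle, h6]
    have h7 : (d:ℝ) - K ≤ lambda2 B := le_of_mul_le_mul_right hfinal hyypos
    rw [hKdef] at h7
    linarith


lemma bound_of_partition {n d : ℕ} (hd : 2 ≤ d) (hn : 4 ≤ n)
    (A : Matrix (Fin n) (Fin n) ℕ)
    (hsym : ∀ i j, A i j = A j i) (hdiag : ∀ i, A i i = 0)
    (hreg : ∀ i, ∑ j, A i j = d)
    (U W : Finset (Fin n)) (hUW : Disjoint U W) (hUne : U.Nonempty) (hWne : W.Nonempty)
    (hno : ∀ i ∈ U, ∀ j ∈ W, A i j = 0)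
    (hR : ((U ∪ W)ᶜ).card ≤ 1) :
    (d : ℝ) - (d : ℝ)/6 - (d : ℝ)/(2*((n:ℝ)-3)) ≤ lambda2 (A.map (fun x => (x : ℝ))) := by
  classical
  by_cases hc : ((U ∪ W)ᶜ).card = 1
  · obtain ⟨v, hv⟩ := Finset.card_eq_one.mp hc
    have hvnot : v ∉ U ∧ v ∉ W := by
      have hvmem : v ∈ (U ∪ W)ᶜ := by rw [hv]; exact Finset.mem_singleton_self v
      rw [Finset.mem_compl, Finset.mem_union] at hvmem
      push_neg at hvmem
      exact hvmem
    have hdisj2 : Disjoint (U ∪ W) ({v} : Finset (Fin n)) := by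
      rw [Finset.disjoint_singleton_right, Finset.mem_union]
      push_neg
      exact hvnot
    have huniv3 : ∀ i, i ∈ U ∨ i ∈ W ∨ i = v := by
      intro i
      by_cases h1 : i ∈ U
      · exact Or.inl h1
      by_cases h2 : i ∈ W
      · exact Or.inr (Or.inl h2)
      right; right
      have : i ∈ (U ∪ W)ᶜ := by
        rw [Finset.mem_compl, Finset.mem_union]; push_neg; exact ⟨h1, h2⟩
      rwa [hv, Finset.mem_singleton] at this
    have huniv' : (U ∪ W) ∪ {v} = Finset.univ := by
      apply Finset.eq_univ_iff_forall.mpr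
      intro i
      rw [Finset.mem_union, Finset.mem_union, Finset.mem_singleton]
      rcases huniv3 i with h | h | h
      · exact Or.inl (Or.inl h)
      · exact Or.inl (Or.inr h)
      · exact Or.inr h
    have hpartN : ∀ f : Fin n → ℕ, ∑ i, f i = (∑ i ∈ U, f i) + (∑ i ∈ W, f i) + f v := by
      intro f
      rw [← huniv', Finset.sum_union hdisj2, Finset.sum_union hUW, Finset.sum_singleton]
    by_cases hU1 : U.card = 1
    · -- U = {u}; move v into U, R becomes empty
      obtain ⟨u, hu⟩ := Finset.card_eq_one.mp hU1
      have huU : u ∈ U := by rw [hu]; exact Finset.mem_singleton_self u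
      have hAuv : A u v = d := by
        have h1 := hreg u
        rw [hpartN (fun j => A u j)] at h1
        have h2 : ∑ j ∈ U, A u j = 0 := by
          rw [hu, Finset.sum_singleton]
          have : u = u := rfl
          rw [show A u u = 0 from hdiag u]
        have h3 : ∑ j ∈ W, A u j = 0 :=
          Finset.sum_eq_zero (fun j hj => hno u huU j hj)
        omega
      have hAvu : A v u = d := by rw [hsym]; exact hAuv
      have hWv0 : ∀ w ∈ W, A v w = 0 := by
        have h1 := hreg v
        rw [hpartN (fun j => A v j)] at h1
        have h2 : ∑ j ∈ U, A v j = d := by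
          rw [hu, Finset.sum_singleton]; exact hAvu
        have h3 : ∑ j ∈ W, A v j = 0 := by omega
        intro w hw
        exact (Finset.sum_eq_zero_iff).mp h3 w hw
      have hnewuniv : (insert v U ∪ W) = Finset.univ := by
        apply Finset.eq_univ_iff_forall.mpr
        intro i
        rw [Finset.mem_union, Finset.mem_insert]
        rcases huniv3 i with h | h | h
        · exact Or.inl (Or.inr h)
        · exact Or.inr h
        · exact Or.inl (Or.inl h)
      have hcompl0 : ((insert v U ∪ W)ᶜ).card = 0 := by
        rw [hnewuniv, Finset.compl_univ, Finset.card_empty]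
      apply core_bound hd hn A hsym hdiag hreg (insert v U) W
      · rw [Finset.disjoint_left]
        intro i hi
        rw [Finset.mem_insert] at hi
        rcases hi with rfl | hi
        · exact hvnot.2
        · exact Finset.disjoint_left.mp hUW hi
      · exact ⟨v, Finset.mem_insert_self v U⟩
      · exact hWne
      · intro i hi j hj
        rw [Finset.mem_insert] at hi
        rcases hi with rfl | hi
        · exact hWv0 j hj
        · exact hno i hi j hj
      · rw [hcompl0]; omega
      · intro h; rw [hcompl0] at h; omega
    · by_cases hW1 : W.card = 1
      · -- W = {w}; move v into W
        obtain ⟨w, hw⟩ := Finset.card_eq_one.mp hW1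
        have hwW : w ∈ W := by rw [hw]; exact Finset.mem_singleton_self w
        have hAwv : A w v = d := by
          have h1 := hreg w
          rw [hpartN (fun j => A w j)] at h1
          have h2 : ∑ j ∈ W, A w j = 0 := by
            rw [hw, Finset.sum_singleton, hdiag]
          have h3 : ∑ j ∈ U, A w j = 0 :=
            Finset.sum_eq_zero (fun j hj => by rw [hsym]; exact hno j hj w hwW)
          omega
        have hAvw : A v w = d := by rw [hsym]; exact hAwv
        have hUv0 : ∀ i ∈ U, A v i = 0 := by
          have h1 := hreg v
          rw [hpartN (fun j => A v j)] at h1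
          have h2 : ∑ j ∈ W, A v j = d := by
            rw [hw, Finset.sum_singleton]; exact hAvw
          have h3 : ∑ j ∈ U, A v j = 0 := by omega
          intro i hi
          exact (Finset.sum_eq_zero_iff).mp h3 i hi
        have hnewuniv : (U ∪ insert v W) = Finset.univ := by
          apply Finset.eq_univ_iff_forall.mpr
          intro i
          rw [Finset.mem_union, Finset.mem_insert]
          rcases huniv3 i with h | h | h
          · exact Or.inl h
          · exact Or.inr (Or.inr h)
          · exact Or.inr (Or.inl h)
        have hcompl0 : ((U ∪ insert v W)ᶜ).card = 0 := by
          rw [hnewuniv, Finset.compl_univ, Finset.card_empty]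
        apply core_bound hd hn A hsym hdiag hreg U (insert v W)
        · rw [Finset.disjoint_right]
          intro i hi
          rw [Finset.mem_insert] at hi
          rcases hi with rfl | hi
          · exact hvnot.1
          · exact Finset.disjoint_right.mp hUW hi
        · exact hUne
        · exact ⟨v, Finset.mem_insert_self v W⟩
        · intro i hi j hj
          rw [Finset.mem_insert] at hj
          rcases hj with rfl | hj
          · rw [hsym]; exact hUv0 i hi
          · exact hno i hi j hj
        · rw [hcompl0]; omega
        · intro h; rw [hcompl0] at h; omega
      · apply core_bound hd hn A hsym hdiag hreg U W hUW hUne hWne hno hR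
        intro _
        have h1 : 1 ≤ U.card := Finset.card_pos.mpr hUne
        have h2 : 1 ≤ W.card := Finset.card_pos.mpr hWne
        omega
  · apply core_bound hd hn A hsym hdiag hreg U W hUW hUne hWne hno hR
    intro h
    exact absurd h hc


end AuxProofs

/-- Let G be an n-vertex d-regular multigraph with d ≥ 2 and n ≥ 4.
If λ2(G) < d − d/6 − d/(2(n−3)), then κ(G) ≥ 2. -/
theorem stmt0 {n d : ℕ} (hd : 2 ≤ d) (hn : 4 ≤ n)
    (A : Matrix (Fin n) (Fin n) ℕ)
    (hsym : ∀ i j, A i j = A j i) (hdiag : ∀ i, A i i = 0)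
    (hreg : ∀ i, ∑ j, A i j = d)
    (hlam : lambda2 (A.map (fun x => (x : ℝ))) <
      (d : ℝ) - (d : ℝ) / 6 - (d : ℝ) / (2 * ((n : ℝ) - 3))) :
    2 ≤ kappa A := by
  classical
  by_contra hcon
  push_neg at hcon
  set P : Set ℕ := {k | ∃ S : Finset (Fin n), S.card = k ∧
    (¬ ((toSimple A).induce (↑(Sᶜ) : Set (Fin n))).Connected ∨ (Sᶜ).card = 1)} with hPdef
  have hkP : kappa A = sInf P := rfl
  have hn0 : 0 < n := by omega
  have hPne : P.Nonempty := by
    refine ⟨(({⟨0, hn0⟩} : Finset (Fin n))ᶜ).card, ({⟨0, hn0⟩} : Finset (Fin n))ᶜ, rfl, Or.inr ?_⟩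
    rw [compl_compl]
    exact Finset.card_singleton _
  have hmem := Nat.sInf_mem hPne
  rw [← hkP] at hmem
  obtain ⟨S, hScard, hSdis⟩ := hmem
  have hS1 : S.card ≤ 1 := by omega
  have hcompl3 : 3 ≤ (Sᶜ).card := by
    rw [Finset.card_compl, Fintype.card_fin]
    omega
  rcases hSdis with hdis | h1
  swap
  · omega
  set Ω : Set (Fin n) := (↑(Sᶜ) : Set (Fin n)) with hΩdef
  set G : SimpleGraph (Fin n) := toSimple A with hGdef
  have hNE : Nonempty Ω := by
    obtain ⟨a, ha⟩ := Finset.card_pos.mp (show 0 < (Sᶜ).card by omega)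
    exact ⟨⟨a, by rwa [hΩdef, Finset.mem_coe]⟩⟩
  rw [SimpleGraph.connected_iff] at hdis
  have hprec : ¬ (G.induce Ω).Preconnected := fun hp => hdis ⟨hp, hNE⟩
  rw [SimpleGraph.Preconnected] at hprec
  push_neg at hprec
  obtain ⟨a, bb, hnr⟩ := hprec
  set U : Finset (Fin n) := (Sᶜ).filter
    (fun z => ∃ hz : z ∈ Ω, (G.induce Ω).Reachable a ⟨z, hz⟩) with hUdef
  set W : Finset (Fin n) := Sᶜ \ U with hWdef
  have haU : (a : Fin n) ∈ U := by
    rw [hUdef, Finset.mem_filter]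
    refine ⟨Finset.mem_coe.mp a.2, a.2, ?_⟩
    rw [Subtype.coe_eta]
  have hbW : (bb : Fin n) ∈ W := by
    rw [hWdef, Finset.mem_sdiff]
    refine ⟨Finset.mem_coe.mp bb.2, ?_⟩
    intro hmem
    rw [hUdef, Finset.mem_filter] at hmem
    obtain ⟨-, hz, hreach⟩ := hmem
    rw [Subtype.coe_eta] at hreach
    exact hnr hreach
  have hdisjUW : Disjoint U W := Finset.disjoint_sdiff
  have hunion : U ∪ W = Sᶜ := Finset.union_sdiff_of_subset (Finset.filter_subset _ _)
  have hno : ∀ i ∈ U, ∀ j ∈ W, A i j = 0 := by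
    intro i hi j hj
    by_contra h0
    have hApos : 0 < A i j := Nat.pos_of_ne_zero h0
    rw [hUdef, Finset.mem_filter] at hi
    obtain ⟨hiS, hzi, hir⟩ := hi
    rw [hWdef, Finset.mem_sdiff] at hj
    obtain ⟨hjS, hjnU⟩ := hj
    have hzj : j ∈ Ω := Finset.mem_coe.mpr hjS
    have hij : i ≠ j := by
      rintro rfl
      apply hjnU
      rw [hUdef, Finset.mem_filter]
      exact ⟨hiS, hzi, hir⟩
    have hadj : G.Adj i j := by
      rw [hGdef]
      show (SimpleGraph.fromRel (fun i j => 0 < A i j)).Adj i j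
      rw [SimpleGraph.fromRel_adj]
      exact ⟨hij, Or.inl hApos⟩
    have hadj' : (G.induce Ω).Adj ⟨i, hzi⟩ ⟨j, hzj⟩ := by
      simp only [SimpleGraph.comap_adj, Function.Embedding.coe_subtype]
      exact hadj
    apply hjnU
    rw [hUdef, Finset.mem_filter]
    exact ⟨hjS, hzj, hir.trans hadj'.reachable⟩
  have hbound := bound_of_partition hd hn A hsym hdiag hreg U W hdisjUW
    ⟨_, haU⟩ ⟨_, hbW⟩ hno (by rw [hunion, compl_compl]; exact hS1)
  linarith
end

section
/- For every positive integer k, let G be the multigraph on 5 vertices with adjacency matrix [[0, 3k, k, 0, 0], [3k, 0, k, 0, 0], [k, k, 0, k, k], [0, 0, k, 0, 3k], [0, 0, k, 3k, 0]]. Then G is a d-regular multigraph with d = 4k, its vertex-connectivity satisfies κ(G) = 1, and its second-largest eigenvalue satisfies λ2(G) = (3/4)d = ((8·5−25)/(9·5−25))·d. -/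
open Matrix Finset BigOperators

private lemma invarLemma {V : Type*} {G : SimpleGraph V} (f : V → Bool)
    (h : ∀ u v, G.Adj u v → f u = f v) {a b : V} (hr : G.Reachable a b) : f a = f b := by
  obtain ⟨w⟩ := hr
  induction w with
  | nil => rfl
  | cons hadj _ ih => exact (h _ _ hadj).trans ih

private lemma hubConnected {V : Type*} {G : SimpleGraph V} (h : V)
    (hh : ∀ v, v ≠ h → G.Adj v h) : G.Connected := by
  have : Nonempty V := ⟨h⟩
  refine ⟨fun u v => ?_⟩
  have ru : ∀ w, G.Reachable w h := by
    intro w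
    rcases eq_or_ne w h with hw | hw
    · exact hw ▸ SimpleGraph.Reachable.refl _
    · exact (hh w hw).reachable
  exact (ru u).trans (ru v).symm

open Polynomial in
set_option maxHeartbeats 1000000 in
/-- for every positive integer k, the given 5-vertex multigraph is
4k-regular, has vertex-connectivity 1, and its second-largest eigenvalue equals
(3/4)·d = ((8·5−25)/(9·5−25))·d where d = 4k. -/
theorem stmt5 (k : ℕ) (hk : 1 ≤ k)
    (A : Matrix (Fin 5) (Fin 5) ℕ)
    (hA : A = !![0, 3*k, k, 0, 0;
                 3*k, 0, k, 0, 0;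
                 k, k, 0, k, k;
                 0, 0, k, 0, 3*k;
                 0, 0, k, 3*k, 0]) :
    (∀ i, ∑ j, A i j = 4 * k) ∧
    kappa A = 1 ∧
    lambda2 (A.map (fun x => (x : ℝ))) = (3 / 4 : ℝ) * ((4 * k : ℕ) : ℝ) ∧
    (3 / 4 : ℝ) * ((4 * k : ℕ) : ℝ) =
      ((8 * 5 - 25 : ℝ) / (9 * 5 - 25)) * ((4 * k : ℕ) : ℝ) := by
  refine ⟨?_, ?_, ?_, ?_⟩
  · -- regularity
    intro i
    rw [hA]
    fin_cases i <;>
      simp [Fin.sum_univ_five, Matrix.vecHead, Matrix.vecTail,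
        Matrix.cons_val_two, Matrix.cons_val_three, Matrix.cons_val_four] <;>
      ring
  · -- vertex connectivity
    set T := {m | ∃ S : Finset (Fin 5), S.card = m ∧
      (¬ ((toSimple A).induce (↑(Sᶜ) : Set (Fin 5))).Connected ∨ (Sᶜ).card = 1)} with hT
    have h1 : 1 ∈ T := by
      refine ⟨{2}, by simp, Or.inl ?_⟩
      intro hc
      have hinv : ∀ u v, ((toSimple A).induce
          (↑(({2} : Finset (Fin 5))ᶜ) : Set (Fin 5))).Adj u v →
          (fun v : (↑(({2} : Finset (Fin 5))ᶜ) : Set (Fin 5)) => decide (v.1.val < 2)) u =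
          (fun v : (↑(({2} : Finset (Fin 5))ᶜ) : Set (Fin 5)) => decide (v.1.val < 2)) v := by
        rintro ⟨u, hu⟩ ⟨v, hv⟩ hadj
        have hedge : (0 < A u v ∨ 0 < A v u) := hadj.2
        have hu' : u ≠ 2 := by simpa using hu
        have hv' : v ≠ 2 := by simpa using hv
        show decide (u.val < 2) = decide (v.val < 2)
        rw [hA] at hedge
        clear hadj hu hv
        fin_cases u <;> fin_cases v <;>
          simp_all [Matrix.vecHead, Matrix.vecTail, Matrix.cons_val_two,
            Matrix.cons_val_three, Matrix.cons_val_four]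
      have h03 := invarLemma _ hinv (hc.preconnected ⟨0, by simp⟩ ⟨3, by simp⟩)
      exact absurd h03 (by decide)
    have h0 : 0 ∉ T := by
      rintro ⟨S, hS, hdis | hcard⟩
      · rw [Finset.card_eq_zero] at hS
        subst hS
        apply hdis
        apply hubConnected (⟨2, by simp⟩ : (↑((∅ : Finset (Fin 5))ᶜ) : Set (Fin 5)))
        rintro ⟨v, hv⟩ hne
        have hv2 : v ≠ 2 := fun h => hne (Subtype.ext h)
        show v ≠ 2 ∧ (0 < A v 2 ∨ 0 < A 2 v)
        refine ⟨hv2, ?_⟩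
        rw [hA]
        fin_cases v <;>
          simp_all [Matrix.vecHead, Matrix.vecTail, Matrix.cons_val_two,
            Matrix.cons_val_three, Matrix.cons_val_four] <;>
          omega
      · rw [Finset.card_eq_zero] at hS
        subst hS
        simp at hcard
    have hne : T.Nonempty := ⟨1, h1⟩
    have hmem := Nat.sInf_mem hne
    have hle := Nat.sInf_le h1
    have hne0 : sInf T ≠ 0 := fun h => h0 (h ▸ hmem)
    show sInf T = 1
    omega
  · -- second-largest eigenvalue
    have hk' : (1 : ℝ) ≤ (k : ℝ) := by exact_mod_cast hk
    set κ : ℝ := (k : ℝ) with hκ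
    have hM : A.map (fun x => (x : ℝ)) =
        !![0, 3*κ, κ, 0, 0;
           3*κ, 0, κ, 0, 0;
           κ, κ, 0, κ, κ;
           0, 0, κ, 0, 3*κ;
           0, 0, κ, 3*κ, 0] := by
      subst hA
      rw [← Matrix.ext_iff]
      intro i j
      fin_cases i <;> fin_cases j <;>
        simp [Matrix.map_apply, Matrix.vecHead, Matrix.vecTail,
          Matrix.cons_val_two, Matrix.cons_val_three, Matrix.cons_val_four] <;>
        push_cast <;> ring
    have hcp : (A.map (fun x => (x : ℝ))).charpoly =
        ((([-(3*κ), -(3*κ), -κ, 3*κ, 4*κ] : List ℝ) : Multiset ℝ).map (fun a => X - C a)).prod := by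
      rw [hM, Matrix.charpoly]
      have hcm : charmatrix (!![0, 3*κ, κ, 0, 0;
          3*κ, 0, κ, 0, 0;
          κ, κ, 0, κ, κ;
          0, 0, κ, 0, 3*κ;
          0, 0, κ, 3*κ, 0] : Matrix (Fin 5) (Fin 5) ℝ) =
        !![X, -C (3*κ), -C κ, 0, 0;
           -C (3*κ), X, -C κ, 0, 0;
           -C κ, -C κ, X, -C κ, -C κ;
           0, 0, -C κ, X, -C (3*κ);
           0, 0, -C κ, -C (3*κ), X] := by
        rw [← Matrix.ext_iff]
        intro i j
        fin_cases i <;> fin_cases j <;>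
          simp [charmatrix_apply_eq, charmatrix_apply_ne, Matrix.vecHead, Matrix.vecTail]
      rw [hcm]
      simp [Matrix.det_succ_row_zero, Fin.sum_univ_succ, Fin.succAbove, map_ofNat]
      ring
    have hroots : (A.map (fun x => (x : ℝ))).charpoly.roots =
        (([-(3*κ), -(3*κ), -κ, 3*κ, 4*κ] : List ℝ) : Multiset ℝ) := by
      rw [hcp, Polynomial.roots_multiset_prod_X_sub_C]
    have hsorted : ([-(3*κ), -(3*κ), -κ, 3*κ, 4*κ] : List ℝ).Pairwise (· ≤ ·) := by
      simp [List.pairwise_cons]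
      and_intros <;> linarith
    have heig : eigList (A.map (fun x => (x : ℝ))) = [-(3*κ), -(3*κ), -κ, 3*κ, 4*κ] := by
      unfold eigList
      rw [hroots]
      refine List.Perm.eq_of_pairwise' (Multiset.pairwise_sort _ _) hsorted ?_
      rw [← Multiset.coe_eq_coe]
      exact Multiset.sort_eq _ _
    unfold lambda2
    rw [heig]
    show ([-(3*κ), -(3*κ), -κ, 3*κ, 4*κ] : List ℝ).getD 3 0 = _
    push_cast
    simp [hκ]
    ring
  · -- trivial arithmetic
    norm_num
end

section
/- Let t be an integer with 2 ≤ t ≤ d−1, and let G be an n-vertex d-regular multigraph with n ≥ t+2, which is not obtained by duplicating edges in a complete graph on at most t+1 vertices. If λ2(G) < d − t/2 − t/(n−2), then κ'(G) ≥ t+1. -/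
open Matrix Finset BigOperators Polynomial

lemma charpoly_conj' {n : ℕ} (P Q M : Matrix (Fin n) (Fin n) ℝ)
    (h1 : P * Q = 1) (h2 : Q * P = 1) : (P * M * Q).charpoly = M.charpoly := by
  have key : charmatrix (P * M * Q) =
      (C : ℝ →+* ℝ[X]).mapMatrix P * charmatrix M * (C : ℝ →+* ℝ[X]).mapMatrix Q := by
    rw [charmatrix, charmatrix]
    rw [mul_sub, sub_mul]
    congr 1
    · rw [← Matrix.scalar_commute (X : ℝ[X]) (Commute.all X) ((C : ℝ →+* ℝ[X]).mapMatrix P)]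
      rw [mul_assoc, ← _root_.map_mul, h1]
      simp
    · simp [_root_.map_mul]
  have hdet : ((C : ℝ →+* ℝ[X]).mapMatrix P).det * ((C : ℝ →+* ℝ[X]).mapMatrix Q).det = 1 := by
    rw [← Matrix.det_mul, ← _root_.map_mul, h1]; simp
  rw [Matrix.charpoly, Matrix.charpoly, key, Matrix.det_mul, Matrix.det_mul, mul_right_comm,
    hdet, one_mul]

lemma roots_charpoly_symm {n : ℕ} (M : Matrix (Fin n) (Fin n) ℝ) (hM : M.IsHermitian) :
    M.charpoly.roots = Multiset.map hM.eigenvalues Finset.univ.val := by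
  have hU := (Matrix.mem_unitaryGroup_iff).mp (Matrix.IsHermitian.eigenvectorUnitary hM).2
  have hU' := (Matrix.mem_unitaryGroup_iff').mp (Matrix.IsHermitian.eigenvectorUnitary hM).2
  have hst := hM.spectral_theorem
  have : M.charpoly = (Matrix.diagonal hM.eigenvalues).charpoly := by
    conv_lhs => rw [hst, Unitary.conjStarAlgAut_apply]
    rw [charpoly_conj' _ _ _ hU hU']
    congr 1
  rw [this]
  have hd : (Matrix.diagonal hM.eigenvalues).charpoly
      = ∏ i : Fin n, (X - C (hM.eigenvalues i)) := by
    rw [Matrix.charpoly_of_upperTriangular _ (Matrix.blockTriangular_diagonal _)]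
    simp
  rw [hd]
  have : ∏ i : Fin n, (X - C (hM.eigenvalues i))
      = ((Finset.univ.val.map hM.eigenvalues).map fun a => X - C a).prod := by
    simp only [Finset.prod, Multiset.map_map]
    rfl
  rw [this, Polynomial.roots_multiset_prod_X_sub_C]


lemma sorted_countP_le_one {l : List ℝ} {c : ℝ} (hs : l.Pairwise (· ≤ ·))
    (hlen : 2 ≤ l.length) (h : l.getD (l.length - 2) 0 < c) :
    l.countP (fun x => decide (c ≤ x)) ≤ 1 := by
  have h2 : l.length - 2 < l.length := by omega
  rw [List.getD_eq_getElem _ _ h2] at h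
  have hsplit : l.countP (fun x => decide (c ≤ x)) =
      (l.take (l.length - 1)).countP (fun x => decide (c ≤ x))
      + (l.drop (l.length - 1)).countP (fun x => decide (c ≤ x)) := by
    rw [← List.countP_append, List.take_append_drop]
  have h0 : (l.take (l.length - 1)).countP (fun x => decide (c ≤ x)) = 0 := by
    rw [List.countP_eq_zero]
    intro a ha
    rw [List.mem_take_iff_getElem] at ha
    obtain ⟨i, hi, rfl⟩ := ha
    simp only [decide_eq_true_eq]
    push_neg
    have hile : (⟨i, by omega⟩ : Fin l.length) ≤ ⟨l.length - 2, h2⟩ := by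
      simp only [Fin.mk_le_mk]; omega
    have := hs.rel_get_of_le hile
    simp only [List.get_eq_getElem] at this
    exact lt_of_le_of_lt this h
  have h1 : (l.drop (l.length - 1)).countP (fun x => decide (c ≤ x)) ≤ 1 := by
    calc (l.drop (l.length - 1)).countP (fun x => decide (c ≤ x))
        ≤ (l.drop (l.length - 1)).length := List.countP_le_length
      _ = 1 := by rw [List.length_drop]; omega
  omega

lemma lambda2_ge {n : ℕ} (hn : 2 ≤ n) (M : Matrix (Fin n) (Fin n) ℝ) (hM : M.IsHermitian)
    (u v : Fin n → ℝ) (c : ℝ)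
    (hind : ∀ a b : ℝ, a • u + b • v = 0 → a = 0 ∧ b = 0)
    (hq : ∀ a b : ℝ, c * ((a • u + b • v) ⬝ᵥ (a • u + b • v)) ≤
      (a • u + b • v) ⬝ᵥ (M *ᵥ (a • u + b • v))) :
    c ≤ lambda2 M := by
  by_contra hcon
  push_neg at hcon
  classical
  set μ := hM.eigenvalues with hμ
  set U := (Matrix.IsHermitian.eigenvectorUnitary hM : Matrix (Fin n) (Fin n) ℝ) with hUdef
  have hU : U * star U = 1 :=
    (Matrix.mem_unitaryGroup_iff).mp (Matrix.IsHermitian.eigenvectorUnitary hM).2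
  have hU' : star U * U = 1 :=
    (Matrix.mem_unitaryGroup_iff').mp (Matrix.IsHermitian.eigenvectorUnitary hM).2
  have hroots := roots_charpoly_symm M hM
  have hlen : (eigList M).length = n := by
    rw [eigList, Multiset.length_sort, hroots, Multiset.card_map]
    simp
  have hcard : (Finset.univ.filter (fun i => c ≤ μ i)).card ≤ 1 := by
    have e1 : (Finset.univ.filter (fun i => c ≤ μ i)).card
        = Multiset.countP (fun x => c ≤ x) (M.charpoly.roots) := by
      rw [hroots, Multiset.countP_map]
      rw [Finset.card, Finset.filter_val]
    have e2 : Multiset.countP (fun x => c ≤ x) M.charpoly.roots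
        = (eigList M).countP (fun x => decide (c ≤ x)) := by
      conv_lhs => rw [← Multiset.sort_eq M.charpoly.roots (· ≤ ·)]
      rw [Multiset.coe_countP]
      rfl
    rw [e1, e2]
    have hgoal : (eigList M).getD ((eigList M).length - 2) 0 < c := by
      rw [hlen]; exact hcon
    exact sorted_countP_le_one (Multiset.pairwise_sort _ _) (by rw [hlen]; exact hn) hgoal
  obtain ⟨i0, hK⟩ : ∃ i0 : Fin n, ∀ i, c ≤ μ i → i = i0 := by
    rcases (Finset.univ.filter (fun i => c ≤ μ i)).eq_empty_or_nonempty with he | ⟨j, hj⟩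
    · refine ⟨⟨0, by omega⟩, fun i hi => ?_⟩
      have hmem : i ∈ Finset.univ.filter (fun i => c ≤ μ i) :=
        Finset.mem_filter.mpr ⟨Finset.mem_univ _, hi⟩
      rw [he] at hmem
      exact absurd hmem (Finset.notMem_empty i)
    · refine ⟨j, fun i hi => ?_⟩
      exact Finset.card_le_one.mp hcard i (Finset.mem_filter.mpr ⟨Finset.mem_univ _, hi⟩) j hj
  set α := ((star U) *ᵥ u) i0 with hα
  set β := ((star U) *ᵥ v) i0 with hβ
  obtain ⟨a, b, hab0, habα⟩ : ∃ a b : ℝ, ¬(a = 0 ∧ b = 0) ∧ a * α + b * β = 0 := by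
    by_cases h : α = 0 ∧ β = 0
    · exact ⟨1, 0, by simp, by simp [h.1, h.2]⟩
    · refine ⟨β, -α, ?_, by ring⟩
      rw [not_and_or] at h
      rcases h with h | h
      · intro hc; exact h (by simpa using congrArg Neg.neg hc.2)
      · intro hc; exact h hc.1
  set x := a • u + b • v with hx
  have hxne : x ≠ 0 := fun h => hab0 (hind a b h)
  set y := (star U) *ᵥ x with hy
  have hyx : U *ᵥ y = x := by rw [hy, Matrix.mulVec_mulVec, hU, Matrix.one_mulVec]
  have hyne : y ≠ 0 := by
    intro h; apply hxne; rw [← hyx, h, Matrix.mulVec_zero]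
  have hyi0 : y i0 = 0 := by
    rw [hy, hx, Matrix.mulVec_add, Matrix.mulVec_smul, Matrix.mulVec_smul]
    simpa using habα
  have hT : star U = Uᵀ := by
    ext i j; simp [Matrix.star_apply]
  have hxU : x ᵥ* U = y := by
    rw [hy, hT, Matrix.mulVec_transpose]
  have hnorm : x ⬝ᵥ x = y ⬝ᵥ y := by
    calc x ⬝ᵥ x = x ⬝ᵥ (U *ᵥ y) := by rw [hyx]
    _ = (x ᵥ* U) ⬝ᵥ y := Matrix.dotProduct_mulVec _ _ _
    _ = y ⬝ᵥ y := by rw [hxU]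
  have hD : Matrix.diagonal ((RCLike.ofReal : ℝ → ℝ) ∘ μ) = Matrix.diagonal μ := by
    congr 1
  have hqForm : x ⬝ᵥ (M *ᵥ x) = ∑ i, μ i * (y i * y i) := by
    have hMx : M *ᵥ x = U *ᵥ (Matrix.diagonal μ *ᵥ y) := by
      conv_lhs => rw [hM.spectral_theorem, Unitary.conjStarAlgAut_apply]
      rw [← hUdef, hD, Matrix.mul_assoc, ← Matrix.mulVec_mulVec, ← Matrix.mulVec_mulVec, ← hy]
    rw [hMx, Matrix.dotProduct_mulVec, hxU]
    simp only [dotProduct, Matrix.mulVec_diagonal]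
    exact Finset.sum_congr rfl (fun i _ => by ring)
  have hstrict : ∑ i, μ i * (y i * y i) < c * (y ⬝ᵥ y) := by
    have hcy : c * (y ⬝ᵥ y) = ∑ i, c * (y i * y i) := by
      simp [dotProduct, Finset.mul_sum]
    rw [hcy]
    obtain ⟨j, hj⟩ : ∃ j, y j ≠ 0 := by
      by_contra h; push_neg at h; exact hyne (funext h)
    apply Finset.sum_lt_sum
    · intro i _
      by_cases hci : c ≤ μ i
      · have hii : i = i0 := hK i hci
        rw [hii, hyi0]; simp
      · push_neg at hci
        nlinarith [mul_self_nonneg (y i)]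
    · refine ⟨j, Finset.mem_univ j, ?_⟩
      have hji0 : j ≠ i0 := fun h => hj (h ▸ hyi0)
      have hμj : μ j < c := by
        by_contra h; push_neg at h; exact hji0 (hK j h)
      have hyj : 0 < y j * y j := mul_self_pos.mpr hj
      nlinarith
  have hfin := hq a b
  rw [← hx] at hfin
  rw [hqForm, hnorm] at hfin
  linarith

lemma dot_block {n : ℕ} (S : Finset (Fin n)) (R : Matrix (Fin n) (Fin n) ℝ) (a b : ℝ)
    (x : Fin n → ℝ) (hx : ∀ i, x i = if i ∈ S then a else b) :
    x ⬝ᵥ (R *ᵥ x) = a*a*(∑ i ∈ S, ∑ j ∈ S, R i j) + a*b*(∑ i ∈ S, ∑ j ∈ Sᶜ, R i j)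
      + b*a*(∑ i ∈ Sᶜ, ∑ j ∈ S, R i j) + b*b*(∑ i ∈ Sᶜ, ∑ j ∈ Sᶜ, R i j) := by
  have hinner : ∀ i, (∑ j, R i j * x j)
      = (∑ j ∈ S, R i j) * a + (∑ j ∈ Sᶜ, R i j) * b := by
    intro i
    rw [← Finset.sum_add_sum_compl S (fun j => R i j * x j)]
    congr 1
    · rw [Finset.sum_mul]
      apply Finset.sum_congr rfl
      intro j hj
      rw [hx j, if_pos hj]
    · rw [Finset.sum_mul]
      apply Finset.sum_congr rfl
      intro j hj
      rw [hx j, if_neg (by simpa using hj)]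
  have hsplit : ∀ (T : Finset (Fin n)) (cst : ℝ), (∀ i ∈ T, x i = cst) →
      ∑ i ∈ T, x i * ∑ j, R i j * x j
        = cst*a*(∑ i ∈ T, ∑ j ∈ S, R i j) + cst*b*(∑ i ∈ T, ∑ j ∈ Sᶜ, R i j) := by
    intro T cst hT
    calc ∑ i ∈ T, x i * ∑ j, R i j * x j
        = ∑ i ∈ T, (cst*a*(∑ j ∈ S, R i j) + cst*b*(∑ j ∈ Sᶜ, R i j)) := by
          apply Finset.sum_congr rfl
          intro i hi
          rw [hT i hi, hinner i]; ring
      _ = ∑ i ∈ T, cst*a*(∑ j ∈ S, R i j) + ∑ i ∈ T, cst*b*(∑ j ∈ Sᶜ, R i j) :=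
          Finset.sum_add_distrib
      _ = cst*a*(∑ i ∈ T, ∑ j ∈ S, R i j) + cst*b*(∑ i ∈ T, ∑ j ∈ Sᶜ, R i j) := by
          rw [← Finset.mul_sum, ← Finset.mul_sum]
  have hmain : x ⬝ᵥ (R *ᵥ x) = ∑ i, x i * ∑ j, R i j * x j := by
    simp [dotProduct, Matrix.mulVec]
  rw [hmain, ← Finset.sum_add_sum_compl S (fun i => x i * ∑ j, R i j * x j),
    hsplit S a (fun i hi => by rw [hx i, if_pos hi]),
    hsplit Sᶜ b (fun i hi => by rw [hx i, if_neg (by simpa using hi)])]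
  ring

lemma not_connected_helper {n : ℕ} (C : Matrix (Fin n) (Fin n) ℕ) (u w : Fin n) (huw : u ≠ w)
    (h : ∀ z, C u z = 0 ∧ C z u = 0) : ¬ (toSimple C).Connected := by
  intro hcon
  obtain ⟨p⟩ := hcon.preconnected u w
  cases p with
  | nil => exact huw rfl
  | cons hadj _ =>
    rename_i z _
    rw [toSimple, SimpleGraph.fromRel_adj] at hadj
    rcases hadj.2 with hz | hz
    · rw [(h z).1] at hz; exact absurd hz (lt_irrefl 0)
    · rw [(h z).2] at hz; exact absurd hz (lt_irrefl 0)

lemma quot_key (P Q dd ee a b : ℝ) (hP : 0 < P) (hQ : 0 < Q) (he : 0 ≤ ee) :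
    (dd - ee/P - ee/Q) * (P*(a*a) + Q*(b*b))
      ≤ a*a*(P*dd - ee) + a*b*ee + b*a*ee + b*b*(Q*dd - ee) := by
  have hkey : (a*a*(P*dd - ee) + a*b*ee + b*a*ee + b*b*(Q*dd - ee))
      - (dd - ee/P - ee/Q) * (P*(a*a) + Q*(b*b)) = ee * (a*P + b*Q)^2 / (P*Q) := by
    field_simp
    ring
  have hpos : (0:ℝ) ≤ ee * (a*P + b*Q)^2 / (P*Q) := by positivity
  linarith

lemma frac_key (sR nR eR tR : ℝ) (hs2 : 2 ≤ sR) (hns : 2 ≤ nR - sR) (he : 0 ≤ eR)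
    (het : eR ≤ tR) : eR/sR + eR/(nR - sR) ≤ tR/2 + tR/(nR - 2) := by
  have hs0 : (0:ℝ) < sR := by linarith
  have hns0 : (0:ℝ) < nR - sR := by linarith
  have hn2 : (0:ℝ) < nR - 2 := by linarith
  have hn0 : (0:ℝ) ≤ nR := by linarith
  have ht0 : (0:ℝ) ≤ tR := le_trans he het
  rw [div_add_div _ _ (ne_of_gt hs0) (ne_of_gt hns0),
    div_add_div _ _ (two_ne_zero) (ne_of_gt hn2),
    div_le_div_iff₀ (by positivity) (by positivity)]
  nlinarith [mul_nonneg (mul_nonneg (mul_nonneg hn0 ht0)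
      (by linarith : (0:ℝ) ≤ sR - 2)) (by linarith : (0:ℝ) ≤ (nR - sR) - 2),
    mul_nonneg (mul_nonneg hn0 (by linarith : (0:ℝ) ≤ nR - 2))
      (by linarith : (0:ℝ) ≤ tR - eR)]

/-- Let 2 ≤ t ≤ d−1 and let G be an n-vertex d-regular multigraph
with n ≥ t+2 which is not obtained by duplicating edges in a complete graph on
at most t+1 vertices.  If λ2(G) < d − t/2 − t/(n−2), then κ'(G) ≥ t+1. -/
theorem stmt7 {n d t : ℕ} (ht : 2 ≤ t) (htd : t ≤ d - 1) (hn : t + 2 ≤ n)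
    (A : Matrix (Fin n) (Fin n) ℕ)
    (hsym : ∀ i j, A i j = A j i) (hdiag : ∀ i, A i i = 0)
    (hreg : ∀ i, ∑ j, A i j = d)
    (hnotK : ¬ (n ≤ t + 1 ∧ toSimple A = ⊤))
    (hlam : lambda2 (A.map (fun x => (x : ℝ))) <
      (d : ℝ) - (t : ℝ) / 2 - (t : ℝ) / ((n : ℝ) - 2)) :
    t + 1 ≤ edgeConn A := by
  classical
  have hd3 : 3 ≤ d := by omega
  have hn4 : 4 ≤ n := by omega
  set M := A.map (fun x => (x : ℝ)) with hM
  have hMsym : M.IsHermitian := by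
    rw [Matrix.IsHermitian]
    ext i j
    simp [hM, Matrix.conjTranspose_apply, hsym j i]
  rw [edgeConn]
  apply le_csInf
  · -- nonemptiness: cut around vertex 0
    have h0n : (0 : ℕ) < n := by omega
    set u0 : Fin n := ⟨0, h0n⟩
    refine ⟨d, Matrix.of (fun i j => if i = u0 ∨ j = u0 then A i j else 0), fun i j => ?_,
      fun i j => ?_, ?_, ?_⟩
    · dsimp only [Matrix.of_apply]; split <;> omega
    · dsimp only [Matrix.of_apply]
      rw [hsym i j]
      congr 1
      simp [or_comm]
    · have hcol : ∑ i, A i u0 = d := by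
        calc ∑ i, A i u0 = ∑ i, A u0 i := Finset.sum_congr rfl (fun i _ => hsym i u0)
          _ = d := hreg u0
      have herase : ∑ i ∈ Finset.univ.erase u0, A i u0 = d := by
        have h := Finset.add_sum_erase Finset.univ (fun i => A i u0) (Finset.mem_univ u0)
        rw [hcol] at h
        simp only [hdiag] at h
        omega
      set C : Matrix (Fin n) (Fin n) ℕ :=
        Matrix.of (fun i j => if i = u0 ∨ j = u0 then A i j else 0) with hC
      have hsplit := Finset.add_sum_erase Finset.univ (fun i => ∑ j, C i j)
        (Finset.mem_univ u0)
      beta_reduce at hsplit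
      have hterm1 : ∑ j, C u0 j = d := by
        rw [Finset.sum_congr rfl (fun j _ => (by simp [hC] : C u0 j = A u0 j))]
        exact hreg u0
      have hterm2 : ∑ i ∈ Finset.univ.erase u0, (∑ j, C i j) = d := by
        rw [Finset.sum_congr rfl (fun i hi => ?_)]
        · exact herase
        · have hi' : i ≠ u0 := (Finset.mem_erase.mp hi).1
          have hstep : ∀ j, C i j = if j = u0 then A i j else 0 := fun j => by
            simp [hC, hi']
          rw [Finset.sum_congr rfl (fun j _ => hstep j),
            Finset.sum_ite_eq' Finset.univ u0 (fun j => A i j)]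
          simp
      omega
    · apply not_connected_helper _ u0 ⟨1, by omega⟩ (by simp [Fin.ext_iff])
      intro z
      constructor <;> simp [Matrix.sub_apply]
  · rintro k ⟨B, hBle, hBsym, hBsum, hBdisc⟩
    by_contra hlt
    push_neg at hlt
    have hkt : k ≤ t := by omega
    -- extract the cut
    have hpre : ¬ (toSimple (A - B)).Preconnected := by
      intro h
      have : Nonempty (Fin n) := ⟨⟨0, by omega⟩⟩
      exact hBdisc ⟨h⟩
    rw [SimpleGraph.Preconnected] at hpre
    push_neg at hpre
    obtain ⟨u, w, huw⟩ := hpre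
    set S : Finset (Fin n) := Finset.univ.filter (fun z => (toSimple (A - B)).Reachable u z)
      with hS
    have hu : u ∈ S :=
      Finset.mem_filter.mpr ⟨Finset.mem_univ _, SimpleGraph.Reachable.refl u⟩
    have hw : w ∉ S := by simp [hS, huw]
    have hclosure : ∀ i ∈ S, ∀ j ∉ S, A i j = B i j := by
      intro i hi j hj
      have hij : i ≠ j := by rintro rfl; exact hj hi
      have hadj : ¬ (toSimple (A - B)).Adj i j := by
        intro hadj
        apply hj
        rw [hS, Finset.mem_filter]
        exact ⟨Finset.mem_univ _, ((Finset.mem_filter.mp hi).2).trans hadj.reachable⟩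
      rw [toSimple, SimpleGraph.fromRel_adj] at hadj
      push_neg at hadj
      have h2 := hadj hij
      have h3 : (A - B) i j = 0 := by omega
      have h4 : A i j ≤ B i j := by
        have := Matrix.sub_apply (A) (B) i j ▸ h3
        omega
      exact le_antisymm h4 (hBle i j)
    set e : ℕ := ∑ i ∈ S, ∑ j ∈ Sᶜ, A i j with he
    set s : ℕ := S.card with hs
    have hscompl : Sᶜ.card = n - s := by
      rw [Finset.card_compl, Fintype.card_fin]
    have hsn : s ≤ n := by rw [hs]; exact le_trans (Finset.card_le_univ S) (by simp)
    -- cross sum symmetric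
    have hF2 : ∑ i ∈ Sᶜ, ∑ j ∈ S, A i j = e := by
      rw [he, Finset.sum_comm (f := A)]
      apply Finset.sum_congr rfl
      intro i _
      apply Finset.sum_congr rfl
      intro j _
      exact hsym j i
    have hx1 : ∑ i ∈ S, ∑ j ∈ Sᶜ, B i j = e := by
      rw [he]
      apply Finset.sum_congr rfl; intro i hi
      apply Finset.sum_congr rfl; intro j hj
      exact (hclosure i hi j (by simpa using hj)).symm
    have hx2 : ∑ i ∈ Sᶜ, ∑ j ∈ S, B i j = e := by
      rw [← hF2]
      apply Finset.sum_congr rfl; intro i hi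
      apply Finset.sum_congr rfl; intro j hj
      calc B i j = B j i := hBsym i j
        _ = A j i := (hclosure j hj i (by simpa using hi)).symm
        _ = A i j := hsym j i
    have hF3 : 2 * e ≤ 2 * k := by
      have hbig : (∑ i ∈ S, ∑ j ∈ Sᶜ, B i j) + (∑ i ∈ Sᶜ, ∑ j ∈ S, B i j)
          ≤ ∑ i, ∑ j, B i j := by
        rw [← Finset.sum_add_sum_compl S (fun i => ∑ j, B i j)]
        apply add_le_add
        · apply Finset.sum_le_sum; intro i _
          exact Finset.sum_le_sum_of_subset (Finset.subset_univ _)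
        · apply Finset.sum_le_sum; intro i _
          exact Finset.sum_le_sum_of_subset (Finset.subset_univ _)
      rw [hx1, hx2, hBsum] at hbig
      omega
    have het : e ≤ t := by omega
    have hF5 : (∑ i ∈ S, ∑ j ∈ S, A i j) + e = s * d := by
      have h1 : ∑ i ∈ S, ∑ j, A i j = s * d := by
        rw [Finset.sum_congr rfl (fun i _ => hreg i), Finset.sum_const, smul_eq_mul]
      rw [← h1, he, ← Finset.sum_add_distrib]
      apply Finset.sum_congr rfl; intro i _
      exact Finset.sum_add_sum_compl S (fun j => A i j)
    have hF6 : (∑ i ∈ Sᶜ, ∑ j ∈ Sᶜ, A i j) + e = (n - s) * d := by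
      have h1 : ∑ i ∈ Sᶜ, ∑ j, A i j = (n - s) * d := by
        rw [Finset.sum_congr rfl (fun i _ => hreg i), Finset.sum_const, smul_eq_mul, hscompl]
      rw [← h1, ← hF2, ← Finset.sum_add_distrib]
      apply Finset.sum_congr rfl; intro i _
      rw [add_comm]
      exact Finset.sum_add_sum_compl S (fun j => A i j)
    have hs1 : 1 ≤ s := Finset.card_pos.mpr ⟨u, hu⟩ 
    have hsn1 : s ≤ n - 1 := by
      have : Sᶜ.card ≠ 0 := by
        rw [Finset.card_ne_zero]
        exact ⟨w, Finset.mem_compl.mpr hw⟩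
      omega
    have hs2 : 2 ≤ s := by
      by_contra h
      have hs1' : S.card = 1 := by omega
      obtain ⟨z, hz⟩ := Finset.card_eq_one.mp hs1'
      have hzu : z = u := by
        have := hu; rw [hz, Finset.mem_singleton] at this; exact this.symm
      subst hzu
      have hsum : ∑ j ∈ ({z} : Finset (Fin n))ᶜ, A z j + ∑ j ∈ ({z} : Finset (Fin n)), A z j
          = d := by rw [Finset.sum_compl_add_sum]; exact hreg z
      rw [Finset.sum_singleton, hdiag z] at hsum
      have he' : e = ∑ j ∈ ({z} : Finset (Fin n))ᶜ, A z j := by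
        rw [he, hz, Finset.sum_singleton]
      omega
    have hsn2 : s ≤ n - 2 := by
      by_contra h
      have hs1' : Sᶜ.card = 1 := by omega
      obtain ⟨z, hz⟩ := Finset.card_eq_one.mp hs1'
      have hSc : S = ({z} : Finset (Fin n))ᶜ := by rw [← compl_compl S, hz]
      have he' : e = ∑ j ∈ S, A z j := by rw [← hF2, hz, Finset.sum_singleton]
      have hsum : ∑ j ∈ ({z} : Finset (Fin n))ᶜ, A z j + ∑ j ∈ ({z} : Finset (Fin n)), A z j
          = d := by rw [Finset.sum_compl_add_sum]; exact hreg z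
      rw [Finset.sum_singleton, hdiag z] at hsum
      rw [hSc] at he'
      omega
    -- real part
    have hsR : (2:ℝ) ≤ (s:ℝ) := by exact_mod_cast hs2
    have hnsR : (2:ℝ) ≤ (n:ℝ) - (s:ℝ) := by
      have h1 : s + 2 ≤ n := by omega
      have h2 := (Nat.cast_le (α := ℝ)).mpr h1
      push_cast at h2
      linarith
    have hs0 : (0:ℝ) < s := by linarith
    have hns0 : (0:ℝ) < (n:ℝ) - s := by linarith
    have hn2R : (0:ℝ) < (n:ℝ) - 2 := by
      have h2 := (Nat.cast_le (α := ℝ)).mpr hn4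
      push_cast at h2
      linarith
    have heR : (0:ℝ) ≤ (e:ℝ) := Nat.cast_nonneg e
    have hetR : (e:ℝ) ≤ (t:ℝ) := by exact_mod_cast het
    have hnsub : ((n - s : ℕ) : ℝ) = (n:ℝ) - s := by
      rw [Nat.cast_sub hsn]
    set c : ℝ := (d:ℝ) - e/s - e/((n:ℝ) - s) with hc
    set uvec : Fin n → ℝ := fun i => if i ∈ S then 1 else 0 with huvec
    set vvec : Fin n → ℝ := fun i => if i ∈ S then 0 else 1 with hvvec
    have hxform : ∀ a b : ℝ, ∀ i, (a • uvec + b • vvec) i = if i ∈ S then a else b := by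
      intro a b i
      by_cases h : i ∈ S <;> simp [huvec, hvvec, h]
    have hind : ∀ a b : ℝ, a • uvec + b • vvec = 0 → a = 0 ∧ b = 0 := by
      intro a b hab
      constructor
      · have h1 := congrFun hab u
        rw [hxform a b u, if_pos hu] at h1
        simpa using h1
      · have h1 := congrFun hab w
        rw [hxform a b w, if_neg hw] at h1
        simpa using h1
    have hcastblock : ∀ T T' : Finset (Fin n),
        ∑ i ∈ T, ∑ j ∈ T', M i j = ((∑ i ∈ T, ∑ j ∈ T', A i j : ℕ) : ℝ) := by
      intro T T'
      push_cast
      apply Finset.sum_congr rfl; intro i _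
      apply Finset.sum_congr rfl; intro j _
      simp [hM]
    have hESS : ∑ i ∈ S, ∑ j ∈ S, M i j = (s:ℝ)*d - e := by
      rw [hcastblock]
      have h1 : ((∑ i ∈ S, ∑ j ∈ S, A i j : ℕ):ℝ) + e = s*d := by
        exact_mod_cast congrArg (Nat.cast : ℕ → ℝ) hF5
      linarith
    have hECC : ∑ i ∈ Sᶜ, ∑ j ∈ Sᶜ, M i j = ((n:ℝ)-s)*d - e := by
      rw [hcastblock]
      have h1 : ((∑ i ∈ Sᶜ, ∑ j ∈ Sᶜ, A i j : ℕ):ℝ) + e = ((n-s : ℕ):ℝ)*d := by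
        exact_mod_cast congrArg (Nat.cast : ℕ → ℝ) hF6
      rw [hnsub] at h1
      linarith
    have hE1 : ∑ i ∈ S, ∑ j ∈ Sᶜ, M i j = (e:ℝ) := by
      rw [hcastblock]
    have hE2 : ∑ i ∈ Sᶜ, ∑ j ∈ S, M i j = (e:ℝ) := by
      rw [hcastblock]
      exact_mod_cast congrArg (Nat.cast : ℕ → ℝ) hF2
    have hq : ∀ a b : ℝ, c * ((a • uvec + b • vvec) ⬝ᵥ (a • uvec + b • vvec)) ≤
        (a • uvec + b • vvec) ⬝ᵥ (M *ᵥ (a • uvec + b • vvec)) := by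
      intro a b
      have hSsum : ∑ i ∈ S, ((a • uvec + b • vvec) i * (a • uvec + b • vvec) i)
          = (s:ℝ)*(a*a) := by
        rw [Finset.sum_congr rfl (fun i hi => by rw [hxform a b i, if_pos hi])]
        rw [Finset.sum_const, nsmul_eq_mul, hs]
      have hCsum : ∑ i ∈ Sᶜ, ((a • uvec + b • vvec) i * (a • uvec + b • vvec) i)
          = ((n:ℝ)-s)*(b*b) := by
        rw [Finset.sum_congr rfl (fun i hi => by
          rw [hxform a b i, if_neg (by simpa using hi)])]
        rw [Finset.sum_const, nsmul_eq_mul, hscompl, hnsub]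
      have hxx : (a • uvec + b • vvec) ⬝ᵥ (a • uvec + b • vvec)
          = (s:ℝ)*(a*a) + ((n:ℝ)-s)*(b*b) := by
        rw [dotProduct, ← Finset.sum_add_sum_compl S
          (fun i => (a • uvec + b • vvec) i * (a • uvec + b • vvec) i), hSsum, hCsum]
      have hB := dot_block S M a b _ (hxform a b)
      rw [hB, hxx, hESS, hE1, hE2, hECC, hc]
      exact quot_key _ _ _ _ a b hs0 hns0 heR
    have hlower := lambda2_ge (by omega) M hMsym uvec vvec c hind hq
    have hcb : (d:ℝ) - t/2 - t/((n:ℝ)-2) ≤ c := by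
      rw [hc]
      have h1 : (e:ℝ)/s + e/((n:ℝ)-s) ≤ (t:ℝ)/2 + t/((n:ℝ)-2) :=
        frac_key _ _ _ _ hsR hnsR heR hetR
      linarith
    exact lt_irrefl _ (lt_of_le_of_lt hlower (lt_of_lt_of_le hlam hcb))
end

section
/- For all integers d ≥ 3 and n ≥ 14, the second-largest eigenvalue ρ(d,n) of the matrix Q(d,n) satisfies ρ(d,n) > d − 1/3 − 1/(n−3). -/
open Matrix Finset BigOperators

open Polynomial in
lemma eval_charpoly_four' (A : Matrix (Fin 4) (Fin 4) ℝ) (x : ℝ) :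
    A.charpoly.eval x = (x • (1 : Matrix (Fin 4) (Fin 4) ℝ) - A).det := by
  have h : A.charpoly.eval x = (evalRingHom x) A.charpoly := rfl
  rw [h, Matrix.charpoly, RingHom.map_det]
  congr 1
  ext i j
  by_cases hij : i = j
  · subst hij
    simp [Matrix.charmatrix_apply_eq, Matrix.one_apply]
  · simp [Matrix.charmatrix_apply_ne _ _ _ hij, Matrix.one_apply, hij]

lemma det_fin_four' (A : Matrix (Fin 4) (Fin 4) ℝ) :
    det A =
      A 0 0 * (A 1 1 * A 2 2 * A 3 3 - A 1 1 * A 2 3 * A 3 2 - A 1 2 * A 2 1 * A 3 3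
        + A 1 2 * A 2 3 * A 3 1 + A 1 3 * A 2 1 * A 3 2 - A 1 3 * A 2 2 * A 3 1)
      - A 0 1 * (A 1 0 * A 2 2 * A 3 3 - A 1 0 * A 2 3 * A 3 2 - A 1 2 * A 2 0 * A 3 3
        + A 1 2 * A 2 3 * A 3 0 + A 1 3 * A 2 0 * A 3 2 - A 1 3 * A 2 2 * A 3 0)
      + A 0 2 * (A 1 0 * A 2 1 * A 3 3 - A 1 0 * A 2 3 * A 3 1 - A 1 1 * A 2 0 * A 3 3
        + A 1 1 * A 2 3 * A 3 0 + A 1 3 * A 2 0 * A 3 1 - A 1 3 * A 2 1 * A 3 0)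
      - A 0 3 * (A 1 0 * A 2 1 * A 3 2 - A 1 0 * A 2 2 * A 3 1 - A 1 1 * A 2 0 * A 3 2
        + A 1 1 * A 2 2 * A 3 0 + A 1 2 * A 2 0 * A 3 1 - A 1 2 * A 2 1 * A 3 0) := by
  rw [Matrix.det_succ_row_zero]
  simp only [Fin.sum_univ_four, Matrix.det_fin_three, Matrix.submatrix_apply]
  norm_num [Fin.succAbove, Fin.lt_def,
    show Fin.succ (2:Fin 3) = 3 from rfl, show Fin.castSucc (2:Fin 3) = 2 from rfl,
    show Fin.castSucc (1:Fin 3) = 1 from rfl, show Fin.castSucc (0:Fin 3) = 0 from rfl,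
    show ((3:Fin 4):ℕ) = 3 from rfl, show ((2:Fin 4):ℕ) = 2 from rfl,
    show ((1:Fin 4):ℕ) = 1 from rfl, show ((0:Fin 4):ℕ) = 0 from rfl,
    show ((2:Fin 3):ℕ) = 2 from rfl, show ((1:Fin 3):ℕ) = 1 from rfl]
  ring

lemma qmat_eval (D N x : ℝ) (hN4 : (0:ℝ) < N - 4) :
    ((Qmat D N).charpoly.eval x) * (2*(N-4)) =
      11*x^2 + 2*x^3 - 8*x^4 + N*x - 3*N*x^2 - N*x^3 + 2*N*x^4 - 22*D*x - 8*D*x^2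
      + 14*D*x^3 - D*N + 4*D*N*x + 3*D*N*x^2 - 3*D*N*x^3 + 11*D^2 + 10*D^2*x
      - 3*D^2*x^2 - D^2*N - 2*D^2*N*x - 4*D^3 - 4*D^3*x + D^3*N*x + D^4 := by
  have h4 : N - 4 ≠ 0 := ne_of_gt hN4
  have hM : x • (1 : Matrix (Fin 4) (Fin 4) ℝ) - Qmat D N =
      !![x-(D+1)/2, -((D-1)/2), 0, 0;
         -(D-1), x, -1, 0;
         0, -1, x, -(D-1);
         0, 0, -((D-1)/(N-4)), x-(D-(D-1)/(N-4))] := by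
    ext i j
    fin_cases i <;> fin_cases j <;>
      simp [Qmat, Matrix.one_apply, Matrix.vecHead, Matrix.vecTail, Function.comp]
  rw [eval_charpoly_four', hM, det_fin_four']
  simp only [Matrix.of_apply, Matrix.cons_val]
  norm_num [Matrix.cons_val', Matrix.cons_val_zero, Matrix.cons_val_one, Matrix.head_cons,
    Matrix.vecHead, Matrix.vecTail, Matrix.empty_val', Matrix.cons_val_fin_one, Function.comp]
  field_simp
  ring

open Polynomial in
lemma sort_roots_four {p : Polynomial ℝ} (hm : p.Monic) (hdeg : p.natDegree = 4)
    {r1 r2 r3 r4 : ℝ} (h12 : r1 < r2) (h23 : r2 < r3) (h34 : r3 < r4)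
    (hr1 : p.eval r1 = 0) (hr2 : p.eval r2 = 0) (hr3 : p.eval r3 = 0) (hr4 : p.eval r4 = 0) :
    p.roots.sort (· ≤ ·) = [r1, r2, r3, r4] := by
  have hp0 : p ≠ 0 := hm.ne_zero
  have hmemr : ∀ r : ℝ, p.eval r = 0 → r ∈ p.roots := fun r hr =>
    (Polynomial.mem_roots hp0).mpr hr
  have hnd : ([r1, r2, r3, r4] : List ℝ).Nodup := by
    have e12 := h12.ne; have e13 := (h12.trans h23).ne
    have e14 := ((h12.trans h23).trans h34).ne
    have e23 := h23.ne; have e24 := (h23.trans h34).ne; have e34 := h34.ne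
    simp [List.nodup_cons, e12, e13, e14, e23, e24, e34]
  have hle : (([r1, r2, r3, r4] : List ℝ) : Multiset ℝ) ≤ p.roots := by
    rw [Multiset.le_iff_subset (by exact Multiset.coe_nodup.mpr hnd)]
    intro a ha
    simp only [Multiset.mem_coe, List.mem_cons, List.not_mem_nil, or_false] at ha
    rcases ha with rfl | rfl | rfl | rfl
    · exact hmemr _ hr1
    · exact hmemr _ hr2
    · exact hmemr _ hr3
    · exact hmemr _ hr4
  have hcard : Multiset.card p.roots ≤ 4 := by
    have := p.card_roots'
    rwa [hdeg] at this
  have heq : (([r1, r2, r3, r4] : List ℝ) : Multiset ℝ) = p.roots :=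
    Multiset.eq_of_le_of_card_le hle (by simpa using hcard)
  refine (fun hp h1 h2 => List.Perm.eq_of_pairwise' (r := (· ≤ ·)) h1 h2 hp) ?_ ?_ ?_
  · rw [← Multiset.coe_eq_coe, Multiset.sort_eq, ← heq]
  · exact Multiset.pairwise_sort _ _
  · refine List.pairwise_cons.mpr ⟨fun b hb => ?_, List.pairwise_cons.mpr ⟨fun b hb => ?_,
      List.pairwise_cons.mpr ⟨fun b hb => ?_, List.pairwise_singleton _ _⟩⟩⟩
    · simp at hb; rcases hb with rfl | rfl | rfl <;> linarith
    · simp at hb; rcases hb with rfl | rfl <;> linarith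
    · simp at hb; subst hb; linarith

lemma pos_aux {x c : ℝ} (hc : 0 < c) (h : 0 < x * c) : 0 < x := by
  by_contra h'; push_neg at h'; nlinarith

lemma neg_aux {x c : ℝ} (hc : 0 < c) (h : x * c < 0) : x < 0 := by
  by_contra h'; push_neg at h'; nlinarith

set_option maxHeartbeats 3200000 in
lemma rho_gt (D N : ℝ) (hD : 3 ≤ D) (hN : 14 ≤ N) :
    rho D N > D - 1/3 - 1/(N-3) := by
  have hN3 : (0:ℝ) < N - 3 := by linarith
  have hN4 : (0:ℝ) < N - 4 := by linarith
  have ha : (0:ℝ) ≤ D - 3 := by linarith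
  have hb : (0:ℝ) ≤ N - 14 := by linarith
  have hab := mul_nonneg ha hb
  have ha2 := mul_nonneg ha ha
  have ha2b := mul_nonneg ha2 hb
  have ha3 := mul_nonneg ha2 ha
  have ha3b := mul_nonneg ha3 hb
  have ha4 := mul_nonneg ha3 ha
  have ha4b := mul_nonneg ha4 hb
  have hb2 := mul_nonneg hb hb
  have hb3 := mul_nonneg hb2 hb
  have hb4 := mul_nonneg hb3 hb
  have hb5 := mul_nonneg hb4 hb
  have hab2 := mul_nonneg ha hb2
  have hab3 := mul_nonneg ha hb3
  have hab4 := mul_nonneg ha hb4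
  have hab5 := mul_nonneg ha hb5
  set t : ℝ := D - 1/3 - 1/(N-3) with ht
  set p := (Qmat D N).charpoly with hp
  have hmono : p.Monic := (Qmat D N).charpoly_monic
  have hdeg : p.natDegree = 4 := by
    rw [hp, Matrix.charpoly_natDegree_eq_dim]
    simp
  -- the five evaluation facts
  have qev1 : p.eval (-D) * (2*(N-4)) = (3840 + 408*(N-14) + 5072*(D-3) + 544*(D-3)*(N-14) + 2416*(D-3)^2 + 262*(D-3)^2*(N-14) + 492*(D-3)^3 + 54*(D-3)^3*(N-14) + 36*(D-3)^4 + 4*(D-3)^4*(N-14)) := by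
    have h := qmat_eval D N (-D) hN4
    rw [hp, h]; ring
  have qev2 : p.eval (-(D/4)) * (512*(N-4)) = -((49260 + 5190*(N-14) + 38080*(D-3) + 4220*(D-3)*(N-14) + 13160*(D-3)^2 + 1640*(D-3)^2*(N-14) + 2880*(D-3)^3 + 420*(D-3)^3*(N-14) + 300*(D-3)^4 + 50*(D-3)^4*(N-14))) := by
    have h := qmat_eval D N (-(D/4)) hN4
    have e : p.eval (-(D/4)) * (512*(N-4)) = (p.eval (-(D/4)) * (2*(N-4))) * 256 := by ring
    rw [e, hp, h]; ring
  have qev3 : p.eval t * (162*(N-4)*(N-3)^4) = (15049664 + 6480768*(N-14) + 1111384*(N-14)^2 + 94840*(N-14)^3 + 4026*(N-14)^4 + 68*(N-14)^5 + 8951712*(D-3) + 3826032*(D-3)*(N-14) + 651228*(D-3)*(N-14)^2 + 55164*(D-3)*(N-14)^3 + 2325*(D-3)*(N-14)^4 + 39*(D-3)*(N-14)^5) := by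
    have h := qmat_eval D N t hN4
    have e : p.eval t * (162*(N-4)*(N-3)^4) = (p.eval t * (2*(N-4))) * (81*(N-3)^4) := by
      ring
    rw [e, hp, h, ht]
    have h3 : N - 3 ≠ 0 := ne_of_gt hN3
    field_simp
    ring
  have qev4 : p.eval (D - 1/6) * (2592*(N-4)) = -((3580 + 82*(N-14) + 5352*(D-3) + 246*(D-3)*(N-14) + 1836*(D-3)^2 + 108*(D-3)^2*(N-14))) := by
    have h := qmat_eval D N (D - 1/6) hN4
    have e : p.eval (D - 1/6) * (2592*(N-4)) = (p.eval (D - 1/6) * (2*(N-4))) * 1296 := by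
      ring
    rw [e, hp, h]; ring
  have qev5 : p.eval D = 0 := by
    have h := qmat_eval D N D hN4
    have h0 : p.eval D * (2*(N-4)) = 0 := by rw [hp, h]; ring
    have h2 : (2*(N-4)) ≠ 0 := by positivity
    exact (mul_eq_zero.mp h0).resolve_right h2
  -- sign facts
  have s1 : 0 < p.eval (-D) :=
    pos_aux (show (0:ℝ) < 2*(N-4) by linarith)
      (by rw [qev1]; nlinarith [ha, hb, hab, ha2, ha2b, ha3, ha3b, ha4, ha4b])
  have s2 : p.eval (-(D/4)) < 0 :=
    neg_aux (show (0:ℝ) < 512*(N-4) by linarith)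
      (by rw [qev2]; nlinarith [ha, hb, hab, ha2, ha2b, ha3, ha3b, ha4, ha4b])
  have s3 : 0 < p.eval t :=
    pos_aux (show (0:ℝ) < 162*(N-4)*(N-3)^4 by positivity)
      (by rw [qev3]; nlinarith [ha, hb, hab, hb2, hb3, hb4, hb5, hab2, hab3, hab4, hab5])
  have s4 : p.eval (D - 1/6) < 0 :=
    neg_aux (show (0:ℝ) < 2592*(N-4) by linarith)
      (by rw [qev4]; nlinarith [ha, hb, hab, ha2, ha2b])
  -- ordering of the sample points
  have hinv1 : 1/(N-3) ≤ 1 := by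
    rw [div_le_one hN3]; linarith
  have hinv0 : 0 < 1/(N-3) := by positivity
  have o1 : -D ≤ -(D/4) := by linarith
  have o2 : -(D/4) < t := by rw [ht]; linarith
  have o3 : t < D - 1/6 := by rw [ht]; linarith
  have o4 : D - 1/6 < D := by linarith
  -- roots via the intermediate value theorem
  obtain ⟨q1, hq1m, hq1⟩ := intermediate_value_Ioo' o1 p.continuousOn
    (Set.mem_Ioo.mpr ⟨s2, s1⟩)
  obtain ⟨q2, hq2m, hq2⟩ := intermediate_value_Ioo o2.le p.continuousOn
    (Set.mem_Ioo.mpr ⟨s2, s3⟩)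
  obtain ⟨q3, hq3m, hq3⟩ := intermediate_value_Ioo' o3.le p.continuousOn
    (Set.mem_Ioo.mpr ⟨s4, s3⟩)
  have h12 : q1 < q2 := lt_trans hq1m.2 hq2m.1
  have h23 : q2 < q3 := lt_trans hq2m.2 hq3m.1
  have h34 : q3 < D := lt_trans hq3m.2 o4
  have hsort := sort_roots_four hmono hdeg h12 h23 h34 hq1 hq2 hq3 qev5
  have hrho : rho D N = q3 := by
    simp only [rho, lambda2, eigList]
    rw [← hp, hsort]
    rfl
  rw [hrho]
  exact hq3m.1

/-- for all integers d ≥ 3 and n ≥ 14,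
ρ(d,n) > d − 1/3 − 1/(n−3). -/
theorem stmt9 (d n : ℤ) (hd : 3 ≤ d) (hn : 14 ≤ n) :
    rho (d : ℝ) (n : ℝ) > (d : ℝ) - 1 / 3 - 1 / ((n : ℝ) - 3) := by
  have hd' : (3:ℝ) ≤ (d:ℝ) := by exact_mod_cast hd
  have hn' : (14:ℝ) ≤ (n:ℝ) := by exact_mod_cast hn
  exact rho_gt _ _ hd' hn'
end

section
/- Let d ≥ 3 be an odd integer and let G be the multigraph on 6 vertices with adjacency matrix [[0, (d+1)/2, (d−1)/2, 0, 0, 0], [(d+1)/2, 0, (d−1)/2, 0, 0, 0], [(d−1)/2, (d−1)/2, 0, 1, 0, 0], [0, 0, 1, 0, (d−1)/2, (d−1)/2], [0, 0, 0, (d−1)/2, 0, (d+1)/2], [0, 0, 0, (d−1)/2, (d+1)/2, 0]]. Then G is a d-regular multigraph with edge-connectivity κ'(G) = 1, and its second-largest eigenvalue satisfies λ2(G) = (d − 1 + √(9d² − 10d + 17))/4 = ρ(d,6). -/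
open Matrix Finset BigOperators

/-! ### Auxiliary material -/

open Polynomial

set_option maxRecDepth 20000
set_option maxHeartbeats 4000000

/-- The real adjacency matrix of our 6-vertex multigraph, with `d = 2e+1`. -/
noncomputable def M6 (e : ℝ) : Matrix (Fin 6) (Fin 6) ℝ :=
  !![0,e+1,e,0,0,0; e+1,0,e,0,0,0; e,e,0,1,0,0; 0,0,1,0,e,e; 0,0,0,e,0,e+1; 0,0,0,e,e+1,0]

/-- The quotient matrix with `n = 6`, `d = 2e+1`. -/
noncomputable def Q4 (e : ℝ) : Matrix (Fin 4) (Fin 4) ℝ :=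
  !![e+1, e, 0, 0; 2*e, 0, 1, 0; 0, 1, 0, 2*e; 0, 0, e, e+1]

lemma charpoly6 (e : ℝ) :
    (M6 e).charpoly = (X - C (2*e+1)) * (X - C (1-e)) * (X + C (e+1))^2 *
      (X^2 - C e * X - C (2*e^2+e+1)) := by
  apply Polynomial.funext
  intro r
  rw [Matrix.charpoly, ← Polynomial.coe_evalRingHom, RingHom.map_det]
  simp (config := { decide := true }) [Matrix.det_succ_row_zero, Fin.sum_univ_succ, M6,
    charmatrix_apply, Matrix.submatrix_apply, Fin.succAbove, Matrix.diagonal_apply,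
    Matrix.cons_val_zero, Matrix.cons_val_one, Matrix.head_cons, Matrix.head_fin_const,
    Matrix.cons_val_succ, Fin.val_zero, Fin.val_succ, Matrix.vecHead, Matrix.vecTail,
    Fin.castSucc, Fin.castAdd, Fin.castLE]
  ring

lemma charpoly4 (e : ℝ) :
    (Q4 e).charpoly = (X - C (2*e+1)) * (X - C (1-e)) *
      (X^2 - C e * X - C (2*e^2+e+1)) := by
  apply Polynomial.funext
  intro r
  rw [Matrix.charpoly, ← Polynomial.coe_evalRingHom, RingHom.map_det]
  simp (config := { decide := true }) [Matrix.det_succ_row_zero, Fin.sum_univ_succ, Q4,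
    charmatrix_apply, Matrix.submatrix_apply, Fin.succAbove, Matrix.diagonal_apply,
    Matrix.cons_val_zero, Matrix.cons_val_one, Matrix.head_cons, Matrix.head_fin_const,
    Matrix.cons_val_succ, Fin.val_zero, Fin.val_succ, Matrix.vecHead, Matrix.vecTail,
    Fin.castSucc, Fin.castAdd, Fin.castLE]
  ring

lemma sort_eq_of_sorted {l : List ℝ} {s : Multiset ℝ} (h : (↑l : Multiset ℝ) = s)
    (hl : l.Pairwise (· ≤ ·)) : s.sort (· ≤ ·) = l := by
  subst h
  exact List.Perm.eq_of_pairwise' (Multiset.pairwise_sort _ _) hl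
    (Multiset.coe_eq_coe.mp (Multiset.sort_eq _ _))

lemma quad_factor (e s : ℝ) (hs2 : s^2 = 36*e^2+16*e+16) :
    (X - C ((2*e+s)/4)) * (X - C ((2*e-s)/4)) = X^2 - C e * X - C (2*e^2+e+1) := by
  have h1 : (2*e+s)/4 + (2*e-s)/4 = e := by ring
  have h2 : (2*e+s)/4 * ((2*e-s)/4) = -(2*e^2+e+1) := by nlinarith [hs2]
  have expand : (X - C ((2*e+s)/4)) * (X - C ((2*e-s)/4)) =
      X^2 - (C ((2*e+s)/4) + C ((2*e-s)/4)) * X + C ((2*e+s)/4) * C ((2*e-s)/4) := by ring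
  rw [expand, ← C_add, ← C_mul, h1, h2, map_neg]
  ring

lemma roots6 (e s : ℝ) (hs2 : s^2 = 36*e^2+16*e+16) :
    ((X - C (2*e+1)) * (X - C (1-e)) * (X + C (e+1))^2 *
      (X^2 - C e * X - C (2*e^2+e+1)) : ℝ[X]).roots =
    (↑[-(e+1), -(e+1), (2*e-s)/4, 1-e, (2*e+s)/4, 2*e+1] : Multiset ℝ) := by
  have : ((X - C (2*e+1)) * (X - C (1-e)) * (X + C (e+1))^2 *
      (X^2 - C e * X - C (2*e^2+e+1)) : ℝ[X]) =
      (Multiset.map (fun a => X - C a)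
        (↑[-(e+1), -(e+1), (2*e-s)/4, 1-e, (2*e+s)/4, 2*e+1] : Multiset ℝ)).prod := by
    rw [← quad_factor e s hs2]
    simp only [Multiset.map_coe, Multiset.prod_coe, List.map, List.prod_cons, List.prod_nil,
      map_neg]
    ring
  rw [this, Polynomial.roots_multiset_prod_X_sub_C]

lemma roots4 (e s : ℝ) (hs2 : s^2 = 36*e^2+16*e+16) :
    ((X - C (2*e+1)) * (X - C (1-e)) *
      (X^2 - C e * X - C (2*e^2+e+1)) : ℝ[X]).roots =
    (↑[(2*e-s)/4, 1-e, (2*e+s)/4, 2*e+1] : Multiset ℝ) := by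
  have : ((X - C (2*e+1)) * (X - C (1-e)) *
      (X^2 - C e * X - C (2*e^2+e+1)) : ℝ[X]) =
      (Multiset.map (fun a => X - C a)
        (↑[(2*e-s)/4, 1-e, (2*e+s)/4, 2*e+1] : Multiset ℝ)).prod := by
    rw [← quad_factor e s hs2]
    simp only [Multiset.map_coe, Multiset.prod_coe, List.map, List.prod_cons, List.prod_nil]
    ring
  rw [this, Polynomial.roots_multiset_prod_X_sub_C]

lemma sorted6 (e s : ℝ) (he : 1 ≤ e) (hs0 : 0 ≤ s) (hs2 : s^2 = 36*e^2+16*e+16) :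
    ([-(e+1), -(e+1), (2*e-s)/4, 1-e, (2*e+s)/4, 2*e+1] : List ℝ).Pairwise (· ≤ ·) := by
  have hsle : s ≤ 6*e+4 := by nlinarith
  have hsge : 6*e-4 ≤ s := by nlinarith
  simp [List.pairwise_cons]
  and_intros <;> linarith

lemma sorted4 (e s : ℝ) (he : 1 ≤ e) (hs0 : 0 ≤ s) (hs2 : s^2 = 36*e^2+16*e+16) :
    ([(2*e-s)/4, 1-e, (2*e+s)/4, 2*e+1] : List ℝ).Pairwise (· ≤ ·) := by
  have hsle : s ≤ 6*e+4 := by nlinarith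
  have hsge : 6*e-4 ≤ s := by nlinarith
  simp [List.pairwise_cons]
  and_intros <;> linarith

lemma walk_inv {V : Type*} {G : SimpleGraph V} (f : V → Bool)
    (h : ∀ u v, G.Adj u v → f u = f v) {u v : V} (hr : G.Reachable u v) : f u = f v := by
  obtain ⟨w⟩ := hr
  induction w with
  | nil => rfl
  | cons ha _ ih => exact (h _ _ ha).trans ih

lemma edgeConn_eq_one (k : ℕ) (hk1 : 1 ≤ k) (A : Matrix (Fin 6) (Fin 6) ℕ)
    (hA : A = !![0, k+1, k, 0, 0, 0;
                 k+1, 0, k, 0, 0, 0;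
                 k, k, 0, 1, 0, 0;
                 0, 0, 1, 0, k, k;
                 0, 0, 0, k, 0, k+1;
                 0, 0, 0, k, k+1, 0]) :
    edgeConn A = 1 := by
  have e01 : A 0 1 = k+1 := by rw [hA]; rfl
  have e02 : A 0 2 = k := by rw [hA]; rfl
  have e23 : A 2 3 = 1 := by rw [hA]; rfl
  have e34 : A 3 4 = k := by rw [hA]; rfl
  have e45 : A 4 5 = k+1 := by rw [hA]; rfl
  have hconn : (toSimple A).Connected := by
    have adj : ∀ i j : Fin 6, i ≠ j → 0 < A i j → (toSimple A).Adj i j := by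
      intro i j hne hpos
      exact (SimpleGraph.fromRel_adj _ _ _).mpr ⟨hne, Or.inl hpos⟩
    have a01 : (toSimple A).Adj 0 1 := adj 0 1 (by decide) (by omega)
    have a02 : (toSimple A).Adj 0 2 := adj 0 2 (by decide) (by omega)
    have a23 : (toSimple A).Adj 2 3 := adj 2 3 (by decide) (by omega)
    have a34 : (toSimple A).Adj 3 4 := adj 3 4 (by decide) (by omega)
    have a45 : (toSimple A).Adj 4 5 := adj 4 5 (by decide) (by omega)
    have R : ∀ v : Fin 6, (toSimple A).Reachable 0 v := by
      intro v
      fin_cases v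
      · rfl
      · exact a01.reachable
      · exact a02.reachable
      · exact a02.reachable.trans a23.reachable
      · exact (a02.reachable.trans a23.reachable).trans a34.reachable
      · exact ((a02.reachable.trans a23.reachable).trans a34.reachable).trans a45.reachable
    haveI : Nonempty (Fin 6) := ⟨0⟩
    exact ⟨fun u v => (R u).symm.trans (R v)⟩
  set B : Matrix (Fin 6) (Fin 6) ℕ := !![0,0,0,0,0,0; 0,0,0,0,0,0; 0,0,0,1,0,0;
                 0,0,1,0,0,0; 0,0,0,0,0,0; 0,0,0,0,0,0] with hB
  have key : ∀ u v : Fin 6, (u.val ≤ 2 ∧ 2 < v.val ∨ v.val ≤ 2 ∧ 2 < u.val) →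
      (A - B) u v = 0 := by
    subst hA
    simp [Fin.forall_fin_succ, Matrix.sub_apply, hB]
  have hdisc : ¬ (toSimple (A - B)).Connected := by
    intro hcon
    have hf : ∀ u v : Fin 6, (toSimple (A-B)).Adj u v →
        (decide (u.val ≤ 2)) = (decide (v.val ≤ 2)) := by
      intro u v huv
      rw [toSimple, SimpleGraph.fromRel_adj] at huv
      obtain ⟨hne, h⟩ := huv
      by_contra hne2
      have hcross : (u.val ≤ 2 ∧ 2 < v.val) ∨ (v.val ≤ 2 ∧ 2 < u.val) := by
        rcases le_or_gt u.val 2 with h1 | h1 <;> rcases le_or_gt v.val 2 with h2 | h2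
        · exact absurd (by simp [h1, h2]) hne2
        · exact Or.inl ⟨h1, h2⟩
        · exact Or.inr ⟨h2, h1⟩
        · exact absurd (by simp [Nat.not_le.mpr h1, Nat.not_le.mpr h2]) hne2
      have k1 := key u v hcross
      have k2 := key v u (by tauto)
      omega
    have := walk_inv _ hf (hcon.preconnected 0 3)
    simp only [decide_eq_decide] at this
    exact absurd (this.mp (by decide)) (by decide)
  have h1 : 1 ∈ {k | ∃ B' : Matrix (Fin 6) (Fin 6) ℕ,
      (∀ i j, B' i j ≤ A i j) ∧ (∀ i j, B' i j = B' j i) ∧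
      (∑ i, ∑ j, B' i j) = 2 * k ∧ ¬ (toSimple (A - B')).Connected} := by
    refine ⟨B, ?_, ?_, ?_, hdisc⟩
    · subst hA; simp [Fin.forall_fin_succ, hB]
    · subst hA; simp [Fin.forall_fin_succ, hB]
    · rw [hB]; decide
  rw [edgeConn]
  refine le_antisymm (Nat.sInf_le h1) ?_
  rw [Nat.one_le_iff_ne_zero]
  intro h0
  rw [Nat.sInf_eq_zero] at h0
  rcases h0 with h0 | h0
  · obtain ⟨B', hle, hsym, hsum, hdisc'⟩ := h0
    have hB0 : B' = 0 := by
      ext i j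
      have := Finset.sum_eq_zero_iff.mp hsum
      have h2 := Finset.sum_eq_zero_iff.mp (this i (Finset.mem_univ i)) j (Finset.mem_univ j)
      simpa using h2
    have hsub : A - B' = A := by
      ext i j; simp [Matrix.sub_apply, hB0]
    rw [hsub] at hdisc'
    exact hdisc' hconn
  · exact absurd h1 (h0 ▸ Set.notMem_empty 1)

/-- for odd d ≥ 3, the given 6-vertex multigraph is d-regular,
has edge-connectivity 1, and its second-largest eigenvalue equals
(d − 1 + √(9d² − 10d + 17))/4 = ρ(d,6). -/
theorem stmt10 (d : ℕ) (hd : 3 ≤ d) (hodd : Odd d)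
    (A : Matrix (Fin 6) (Fin 6) ℕ)
    (hA : A = !![0, (d+1)/2, (d-1)/2, 0, 0, 0;
                 (d+1)/2, 0, (d-1)/2, 0, 0, 0;
                 (d-1)/2, (d-1)/2, 0, 1, 0, 0;
                 0, 0, 1, 0, (d-1)/2, (d-1)/2;
                 0, 0, 0, (d-1)/2, 0, (d+1)/2;
                 0, 0, 0, (d-1)/2, (d+1)/2, 0]) :
    (∀ i, ∑ j, A i j = d) ∧
    edgeConn A = 1 ∧
    lambda2 (A.map (fun x => (x : ℝ))) =
      ((d : ℝ) - 1 + Real.sqrt (9 * (d : ℝ) ^ 2 - 10 * (d : ℝ) + 17)) / 4 ∧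
    ((d : ℝ) - 1 + Real.sqrt (9 * (d : ℝ) ^ 2 - 10 * (d : ℝ) + 17)) / 4 =
      rho (d : ℝ) 6 := by
  obtain ⟨k, hk⟩ := hodd
  have hk' : d = 2*k+1 := by omega
  have hk1 : 1 ≤ k := by omega
  rw [show (d+1)/2 = k+1 by omega, show (d-1)/2 = k by omega] at hA
  -- real quantities
  set e : ℝ := (k : ℝ) with he_def
  have he : 1 ≤ e := by rw [he_def]; exact_mod_cast hk1
  set s : ℝ := Real.sqrt (36*e^2+16*e+16) with hs_def
  have hs0 : 0 ≤ s := Real.sqrt_nonneg _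
  have hs2 : s^2 = 36*e^2+16*e+16 := Real.sq_sqrt (by positivity)
  have hd' : (d : ℝ) = 2*e+1 := by rw [hk']; push_cast; ring
  have harg : 9 * (d : ℝ) ^ 2 - 10 * (d : ℝ) + 17 = 36*e^2+16*e+16 := by rw [hd']; ring
  -- the map to the real matrix
  have hmap : A.map (fun x => (x : ℝ)) = M6 e := by
    subst hA
    rw [← Matrix.ext_iff]
    simp [Fin.forall_fin_succ, Matrix.map_apply, M6, Matrix.cons_val_zero, Matrix.cons_val_succ]
    exact he_def.symm
  have hQ : Qmat (d : ℝ) 6 = Q4 e := by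
    rw [hd', ← Matrix.ext_iff]
    simp only [Qmat, Q4, Fin.forall_fin_succ, Matrix.cons_val_zero, Matrix.cons_val_succ,
      Matrix.of_apply, IsEmpty.forall_iff, and_true]
    norm_num
    and_intros <;> ring
  -- eigenvalue of the 6x6 matrix
  have hlam6 : lambda2 (A.map (fun x => (x : ℝ))) = (2*e+s)/4 := by
    rw [lambda2, eigList, hmap, charpoly6, roots6 e s hs2,
      sort_eq_of_sorted rfl (sorted6 e s he hs0 hs2)]
    rfl
  have hlam4 : rho (d : ℝ) 6 = (2*e+s)/4 := by
    rw [rho, lambda2, eigList, hQ, charpoly4, roots4 e s hs2,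
      sort_eq_of_sorted rfl (sorted4 e s he hs0 hs2)]
    rfl
  refine ⟨?_, ?_, ?_, ?_⟩
  · subst hA
    simp only [Fin.forall_fin_succ, IsEmpty.forall_iff, and_true, Fin.sum_univ_succ,
      Finset.univ_eq_empty, Finset.sum_empty, Matrix.cons_val_zero, Matrix.cons_val_succ,
      Matrix.of_apply]
    and_intros <;> omega
  · exact edgeConn_eq_one k hk1 A hA
  · rw [hlam6, harg, hd']
    ring
  · rw [hlam4, harg, hd']
    ring
end

section
/- Let G be an n-vertex d-regular multigraph and let S be a nonempty proper subset of its vertex set. If p denotes the number of edges of G (counted with multiplicity) having one endpoint in S and the other endpoint outside S, then λ2(G) ≥ d − p/|S| − p/(n−|S|). -/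
open Matrix Finset BigOperators

lemma sorted_getD (R : ℝ) : ∀ (l : List ℝ), l.Pairwise (· ≤ ·) →
    2 ≤ l.countP (fun a => decide (R ≤ a)) → R ≤ l.getD (l.length - 2) 0 := by
  intro l
  induction l with
  | nil => simp
  | cons a t ih =>
    intro hs h2
    have hcle : ∀ u : List ℝ, u.countP (fun x => decide (R ≤ x)) ≤ u.length :=
      fun u => List.countP_le_length
    by_cases ha : R ≤ a
    · have hlen : 2 ≤ (a :: t).length := le_trans h2 (hcle _)
      have hidx : (a :: t).length - 2 < (a :: t).length := by
        simp only [List.length_cons]; omega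
      rw [List.getD_eq_getElem _ _ hidx]
      have hmem : (a :: t)[(a :: t).length - 2] ∈ a :: t := List.getElem_mem _
      rcases List.mem_cons.mp hmem with h | h
      · rw [h]; exact ha
      · exact le_trans ha (List.rel_of_pairwise_cons hs h)
    · have hfil : (a :: t).countP (fun x => decide (R ≤ x))
          = t.countP (fun x => decide (R ≤ x)) := by
        rw [List.countP_cons]; simp [ha]
      rw [hfil] at h2
      have h2' := ih hs.of_cons h2
      have hlen : 2 ≤ t.length := le_trans h2 (hcle t)
      have heq : (a :: t).length - 2 = (t.length - 2) + 1 := by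
        simp only [List.length_cons]; omega
      rw [heq]
      simpa using h2'

open Polynomial in
lemma charpoly_roots_eq {m : ℕ} (M : Matrix (Fin m) (Fin m) ℝ) (hM : M.IsHermitian) :
    M.charpoly.roots = Multiset.map hM.eigenvalues Finset.univ.val := by
  classical
  set U : Matrix (Fin m) (Fin m) ℝ := (hM.eigenvectorUnitary : Matrix (Fin m) (Fin m) ℝ) with hU
  have hUV : U * star U = 1 := Matrix.mem_unitaryGroup_iff.mp hM.eigenvectorUnitary.2
  have hspec : M = U * diagonal hM.eigenvalues * star U := by
    have h := hM.spectral_theorem; simpa using h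
  set D : Matrix (Fin m) (Fin m) ℝ := diagonal hM.eigenvalues with hD
  have hsc : ∀ N : Matrix (Fin m) (Fin m) ℝ[X],
      Matrix.scalar (Fin m) X * N = N * Matrix.scalar (Fin m) X := by
    intro N; ext i j
    simp [Matrix.scalar_apply, Matrix.diagonal_mul, Matrix.mul_diagonal, mul_comm]
  have hdef : ∀ N : Matrix (Fin m) (Fin m) ℝ, charmatrix N
      = Matrix.scalar (Fin m) X - (C : ℝ →+* ℝ[X]).mapMatrix N := fun _ => rfl
  have hcm : charmatrix M = (C : ℝ →+* ℝ[X]).mapMatrix U * charmatrix D *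
      (C : ℝ →+* ℝ[X]).mapMatrix (star U) := by
    rw [hdef, hdef, mul_sub, sub_mul, ← hsc, mul_assoc, mul_assoc,
      ← _root_.map_mul, hUV, _root_.map_one, mul_one, ← _root_.map_mul, ← _root_.map_mul,
      ← mul_assoc, ← hspec]
  have hcd : charmatrix D = diagonal (fun k => X - C (hM.eigenvalues k)) := by
    ext i j
    by_cases h : i = j
    · subst h; simp [charmatrix_apply_eq, hD, diagonal_apply_eq]
    · simp [charmatrix_apply_ne _ _ _ h, hD, diagonal_apply_ne _ h]
  have hchar : M.charpoly = ∏ k, (X - C (hM.eigenvalues k)) := by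
    rw [Matrix.charpoly, hcm, det_mul, det_mul, hcd, det_diagonal,
      ← RingHom.map_det, ← RingHom.map_det]
    have : C U.det * (∏ k, (X - C (hM.eigenvalues k))) * C (star U).det
        = C (U * star U).det * ∏ k, (X - C (hM.eigenvalues k)) := by
      rw [det_mul, _root_.map_mul]; ring
    rw [this, hUV, det_one, _root_.map_one, one_mul]
  rw [hchar, Finset.prod_eq_multiset_prod,
    show (fun k => X - C (hM.eigenvalues k)) = (fun a => X - C a) ∘ hM.eigenvalues from rfl,
    ← Multiset.map_map, roots_multiset_prod_X_sub_C]

lemma two_eigs_le_lambda2 {m : ℕ} (M : Matrix (Fin m) (Fin m) ℝ) (hM : M.IsHermitian)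
    (R : ℝ) (k0 k1 : Fin m) (hne : k0 ≠ k1)
    (h0 : R ≤ hM.eigenvalues k0) (h1 : R ≤ hM.eigenvalues k1) :
    R ≤ lambda2 M := by
  classical
  have hroots := charpoly_roots_eq M hM
  have hlist : ((eigList M : List ℝ) : Multiset ℝ) = M.charpoly.roots :=
    Multiset.sort_eq _ _
  have hlen : (eigList M).length = m := by
    have := congrArg Multiset.card hlist
    simpa [hroots] using this
  have hcnt : (eigList M).countP (fun a => decide (R ≤ a))
      = (Finset.univ.filter (fun k => R ≤ hM.eigenvalues k)).card := by
    have h1' : Multiset.countP (fun a => R ≤ a) ((eigList M : List ℝ) : Multiset ℝ)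
        = (eigList M).countP (fun a => decide (R ≤ a)) := Multiset.coe_countP _ _
    rw [← h1', hlist, hroots, Multiset.countP_map, Finset.card_filter]
    simp [Multiset.countP_eq_card_filter, Finset.filter_val]
    rfl
  have hsub : ({k0, k1} : Finset (Fin m)) ⊆
      Finset.univ.filter (fun k => R ≤ hM.eigenvalues k) := by
    intro k hk
    rcases Finset.mem_insert.mp hk with h | h
    · subst h; simp [h0]
    · rw [Finset.mem_singleton.mp h]; simp [h1]
  have hcard : 2 ≤ (Finset.univ.filter (fun k => R ≤ hM.eigenvalues k)).card := by
    have := Finset.card_le_card hsub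
    rwa [Finset.card_pair hne] at this
  have := sorted_getD R (eigList M) (Multiset.pairwise_sort _ _) (by rw [hcnt]; exact hcard)
  rwa [hlen] at this


/-- for an n-vertex d-regular multigraph G and a nonempty proper
vertex subset S, with p the number of edges between S and its complement,
λ2(G) ≥ d − p/|S| − p/(n−|S|). -/
theorem stmt11 {n d : ℕ}
    (A : Matrix (Fin n) (Fin n) ℕ)
    (hsym : ∀ i j, A i j = A j i) (hdiag : ∀ i, A i i = 0)
    (hreg : ∀ i, ∑ j, A i j = d)
    (S : Finset (Fin n)) (hS : S.Nonempty) (hSne : S ≠ Finset.univ)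
    (p : ℕ) (hp : p = ∑ i ∈ S, ∑ j ∈ Sᶜ, A i j) :
    (d : ℝ) - (p : ℝ) / (S.card : ℝ) - (p : ℝ) / ((n : ℝ) - (S.card : ℝ)) ≤
      lambda2 (A.map (fun x => (x : ℝ))) := by
  classical
  set M : Matrix (Fin n) (Fin n) ℝ := A.map (fun x => (x : ℝ)) with hMdef
  have hMapp : ∀ i j, M i j = (A i j : ℝ) := fun i j => rfl
  have hM : M.IsHermitian := by
    ext i j
    simp only [Matrix.conjTranspose_apply, hMapp, star_trivial]
    exact_mod_cast hsym j i
  have hs0 : 0 < S.card := Finset.card_pos.mpr hS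
  have hsc0 : 0 < Sᶜ.card := by
    refine Finset.card_pos.mpr (Finset.nonempty_iff_ne_empty.mpr ?_)
    intro h
    exact hSne (by rwa [Finset.compl_eq_empty_iff] at h)
  have hstn : S.card + Sᶜ.card = n := by
    rw [Finset.card_add_card_compl]; simp
  have hn1 : 0 < n := by omega
  set sR : ℝ := (S.card : ℝ) with hsRdef
  set tR : ℝ := (Sᶜ.card : ℝ) with htRdef
  have hnR : (n : ℝ) = sR + tR := by rw [hsRdef, htRdef]; exact_mod_cast hstn.symm
  have hsR : 0 < sR := by rw [hsRdef]; exact_mod_cast hs0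
  have htR : 0 < tR := by rw [htRdef]; exact_mod_cast hsc0
  have hsub : (n : ℝ) - sR = tR := by rw [hnR]; ring
  rw [hsub]
  set R : ℝ := (d : ℝ) - (p : ℝ) / sR - (p : ℝ) / tR with hRdef
  -- row sums
  have hregR : ∀ i, ∑ j, (A i j : ℝ) = (d : ℝ) := by
    intro i; rw [← Nat.cast_sum, hreg]
  -- the test vector
  set x : Fin n → ℝ := fun i => if i ∈ S then tR else -sR with hxdef
  have hxS : ∀ i ∈ S, x i = tR := fun i hi => if_pos hi
  have hxC : ∀ i ∈ Sᶜ, x i = -sR := fun i hi => if_neg (Finset.mem_compl.mp hi)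
  -- edge-count identities
  have hpS : ∑ i ∈ S, ∑ j ∈ Sᶜ, (A i j : ℝ) = (p : ℝ) := by
    rw [hp]; push_cast; rfl
  have hpC : ∑ i ∈ Sᶜ, ∑ j ∈ S, (A i j : ℝ) = (p : ℝ) := by
    rw [Finset.sum_comm, ← hpS]
    exact Finset.sum_congr rfl fun i _ => Finset.sum_congr rfl fun j _ => by
      exact_mod_cast hsym j i
  have heSS : ∑ i ∈ S, ∑ j ∈ S, (A i j : ℝ) = (d : ℝ) * sR - (p : ℝ) := by
    have h1 : ∑ i ∈ S, ((∑ j ∈ S, (A i j : ℝ)) + ∑ j ∈ Sᶜ, (A i j : ℝ))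
        = ∑ i ∈ S, (d : ℝ) := by
      refine Finset.sum_congr rfl fun i _ => ?_
      rw [Finset.sum_add_sum_compl]; exact hregR i
    rw [Finset.sum_add_distrib, hpS, Finset.sum_const, nsmul_eq_mul] at h1
    rw [hsRdef]; linarith [h1]
  have heCC : ∑ i ∈ Sᶜ, ∑ j ∈ Sᶜ, (A i j : ℝ) = (d : ℝ) * tR - (p : ℝ) := by
    have h1 : ∑ i ∈ Sᶜ, ((∑ j ∈ S, (A i j : ℝ)) + ∑ j ∈ Sᶜ, (A i j : ℝ))
        = ∑ i ∈ Sᶜ, (d : ℝ) := by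
      refine Finset.sum_congr rfl fun i _ => ?_
      rw [Finset.sum_add_sum_compl]; exact hregR i
    rw [Finset.sum_add_distrib, hpC, Finset.sum_const, nsmul_eq_mul] at h1
    rw [htRdef]; linarith [h1]
  -- basic dot products
  have hdotx : ∀ v : Fin n → ℝ, x ⬝ᵥ v = ∑ i, x i * v i := fun _ => rfl
  have hrow : ∀ i, (M *ᵥ x) i
      = tR * (∑ j ∈ S, (A i j : ℝ)) - sR * (∑ j ∈ Sᶜ, (A i j : ℝ)) := by
    intro i
    have h1 : (M *ᵥ x) i = ∑ j, (A i j : ℝ) * x j := rfl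
    rw [h1, ← Finset.sum_add_sum_compl S (fun j => (A i j : ℝ) * x j)]
    have e1 : ∑ j ∈ S, (A i j : ℝ) * x j = tR * ∑ j ∈ S, (A i j : ℝ) := by
      rw [Finset.mul_sum]
      exact Finset.sum_congr rfl fun j hj => by rw [hxS j hj]; ring
    have e2 : ∑ j ∈ Sᶜ, (A i j : ℝ) * x j = (-sR) * ∑ j ∈ Sᶜ, (A i j : ℝ) := by
      rw [Finset.mul_sum]
      exact Finset.sum_congr rfl fun j hj => by rw [hxC j hj]; ring
    rw [e1, e2]; ring
  have hxx : x ⬝ᵥ x = tR ^ 2 * sR + sR ^ 2 * tR := by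
    rw [hdotx, ← Finset.sum_add_sum_compl S (fun i => x i * x i)]
    have e1 : ∑ i ∈ S, x i * x i = sR * (tR * tR) := by
      rw [show ∑ i ∈ S, x i * x i = ∑ _i ∈ S, tR * tR from
        Finset.sum_congr rfl fun i hi => by rw [hxS i hi], Finset.sum_const, nsmul_eq_mul]
    have e2 : ∑ i ∈ Sᶜ, x i * x i = tR * (sR * sR) := by
      rw [show ∑ i ∈ Sᶜ, x i * x i = ∑ _i ∈ Sᶜ, (-sR) * (-sR) from
        Finset.sum_congr rfl fun i hi => by rw [hxC i hi], Finset.sum_const, nsmul_eq_mul]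
      ring
    rw [e1, e2]; ring
  have hx1 : x ⬝ᵥ (fun _ => (1 : ℝ)) = 0 := by
    rw [hdotx, ← Finset.sum_add_sum_compl S (fun i => x i * 1)]
    have e1 : ∑ i ∈ S, x i * 1 = sR * tR := by
      rw [show ∑ i ∈ S, x i * 1 = ∑ _i ∈ S, tR from
        Finset.sum_congr rfl fun i hi => by rw [hxS i hi]; ring,
        Finset.sum_const, nsmul_eq_mul]
    have e2 : ∑ i ∈ Sᶜ, x i * 1 = -(tR * sR) := by
      rw [show ∑ i ∈ Sᶜ, x i * 1 = ∑ _i ∈ Sᶜ, -sR from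
        Finset.sum_congr rfl fun i hi => by rw [hxC i hi]; ring,
        Finset.sum_const, nsmul_eq_mul]
      ring
    rw [e1, e2]; ring
  have hxMx : x ⬝ᵥ (M *ᵥ x) = R * (x ⬝ᵥ x) := by
    rw [hdotx, ← Finset.sum_add_sum_compl S (fun i => x i * (M *ᵥ x) i)]
    have e1 : ∑ i ∈ S, x i * (M *ᵥ x) i
        = tR * (tR * ((d : ℝ) * sR - (p : ℝ)) - sR * (p : ℝ)) := by
      have step : ∑ i ∈ S, x i * (M *ᵥ x) i
          = ∑ i ∈ S, (tR * (tR * (∑ j ∈ S, (A i j : ℝ)) - sR * (∑ j ∈ Sᶜ, (A i j : ℝ)))) :=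
        Finset.sum_congr rfl fun i hi => by rw [hrow i, hxS i hi]
      rw [step, ← heSS, ← hpS]
      rw [Finset.mul_sum, Finset.mul_sum, ← Finset.sum_sub_distrib, Finset.mul_sum]
    have e2 : ∑ i ∈ Sᶜ, x i * (M *ᵥ x) i
        = -sR * (tR * (p : ℝ) - sR * ((d : ℝ) * tR - (p : ℝ))) := by
      have step : ∑ i ∈ Sᶜ, x i * (M *ᵥ x) i
          = ∑ i ∈ Sᶜ, ((-sR) * (tR * (∑ j ∈ S, (A i j : ℝ)) - sR * (∑ j ∈ Sᶜ, (A i j : ℝ)))) :=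
        Finset.sum_congr rfl fun i hi => by rw [hrow i, hxC i hi]
      rw [step, ← heCC, ← hpC]
      rw [Finset.mul_sum, Finset.mul_sum, ← Finset.sum_sub_distrib, Finset.mul_sum]
    rw [e1, e2, hxx, hRdef]
    field_simp
    ring
  have hMones : M *ᵥ (fun _ => (1 : ℝ)) = (d : ℝ) • (fun _ => (1 : ℝ)) := by
    funext i
    have h1 : (M *ᵥ (fun _ => (1 : ℝ))) i = ∑ j, (A i j : ℝ) * 1 := rfl
    rw [h1]
    simp only [mul_one, Pi.smul_apply, smul_eq_mul]
    rw [hregR i]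
  -- spectral decomposition
  set U : Matrix (Fin n) (Fin n) ℝ := (hM.eigenvectorUnitary : Matrix (Fin n) (Fin n) ℝ)
    with hUdef
  have hUV : U * star U = 1 := Matrix.mem_unitaryGroup_iff.mp hM.eigenvectorUnitary.2
  have hVU : star U * U = 1 := Matrix.mem_unitaryGroup_iff'.mp hM.eigenvectorUnitary.2
  have hspec : M = U * diagonal hM.eigenvalues * star U := by
    have h := hM.spectral_theorem; simpa using h
  have hUT : Uᵀ = star U := by
    ext i j; simp [Matrix.conjTranspose_apply]
  have hVT : (star U)ᵀ = U := by
    ext i j; simp [Matrix.conjTranspose_apply]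
  obtain ⟨y, hydef⟩ : ∃ y : Fin n → ℝ, y = star U *ᵥ x := ⟨_, rfl⟩
  obtain ⟨z, hzdef⟩ : ∃ z : Fin n → ℝ, z = star U *ᵥ (fun _ => (1 : ℝ)) := ⟨_, rfl⟩
  have hpres : ∀ v w : Fin n → ℝ, (star U *ᵥ v) ⬝ᵥ (star U *ᵥ w) = v ⬝ᵥ w := by
    intro v w
    rw [Matrix.dotProduct_mulVec, ← Matrix.mulVec_transpose, hVT, Matrix.mulVec_mulVec,
      hUV, Matrix.one_mulVec]
  have hyy : y ⬝ᵥ y = x ⬝ᵥ x := by rw [hydef]; exact hpres x x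
  have hyz : y ⬝ᵥ z = 0 := by rw [hydef, hzdef]; exact (hpres x _).trans hx1
  have hDz : ∀ k, hM.eigenvalues k * z k = (d : ℝ) * z k := by
    have h1 : diagonal hM.eigenvalues *ᵥ z = (d : ℝ) • z := by
      have h2 : star U *ᵥ (M *ᵥ (fun _ => (1 : ℝ)))
          = star U *ᵥ ((d : ℝ) • fun _ => (1 : ℝ)) := by rw [hMones]
      rw [hspec, Matrix.mulVec_mulVec,
        show star U * (U * diagonal hM.eigenvalues * star U)
          = diagonal hM.eigenvalues * star U by
            rw [← mul_assoc, ← mul_assoc, hVU, one_mul],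
        ← Matrix.mulVec_mulVec, Matrix.mulVec_smul] at h2
      rw [hzdef]
      exact h2
    intro k
    have h3 := congrFun h1 k
    simpa [Matrix.mulVec_diagonal] using h3
  have hzex : ∃ k, z k ≠ 0 := by
    by_contra h; push_neg at h
    have hz0 : z = 0 := funext h
    have h1 : U *ᵥ z = (fun _ => (1 : ℝ)) := by
      rw [hzdef, Matrix.mulVec_mulVec, hUV, Matrix.one_mulVec]
    rw [hz0, Matrix.mulVec_zero] at h1
    have h2 := congrFun h1 ⟨0, hn1⟩
    simp at h2
  obtain ⟨k0, hk0⟩ := hzex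
  have hk0d : hM.eigenvalues k0 = (d : ℝ) := mul_right_cancel₀ hk0 (hDz k0)
  have hMx : M *ᵥ x = U *ᵥ (diagonal hM.eigenvalues *ᵥ (star U *ᵥ x)) := by
    conv_lhs => rw [hspec]
    rw [← Matrix.mulVec_mulVec, ← Matrix.mulVec_mulVec]
  have hxMxspec : x ⬝ᵥ (M *ᵥ x) = ∑ k, hM.eigenvalues k * (y k) ^ 2 := by
    rw [hMx, Matrix.dotProduct_mulVec, ← Matrix.mulVec_transpose, hUT]
    have h1 : (star U *ᵥ x) ⬝ᵥ (diagonal hM.eigenvalues *ᵥ (star U *ᵥ x))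
        = ∑ k, y k * (hM.eigenvalues k * y k) := by
      rw [← hydef]
      exact Finset.sum_congr rfl fun k _ => by rw [Matrix.mulVec_diagonal]
    rw [h1]
    exact Finset.sum_congr rfl fun k _ => by ring
  have hRd : R ≤ (d : ℝ) := by
    rw [hRdef]
    have h1 : 0 ≤ (p : ℝ) / sR := div_nonneg (Nat.cast_nonneg p) hsR.le
    have h2 : 0 ≤ (p : ℝ) / tR := div_nonneg (Nat.cast_nonneg p) htR.le
    linarith
  have hxxpos : 0 < x ⬝ᵥ x := by rw [hxx]; nlinarith [mul_pos (pow_pos htR 2) hsR, mul_pos (pow_pos hsR 2) htR]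
  have hex : ∃ k, k ≠ k0 ∧ R ≤ hM.eigenvalues k := by
    by_contra hcon; push_neg at hcon
    have hzk : ∀ k, k ≠ k0 → z k = 0 := by
      intro k hk
      by_contra hzk
      have h1 : hM.eigenvalues k = (d : ℝ) := mul_right_cancel₀ hzk (hDz k)
      have h2 := hcon k hk
      rw [h1] at h2
      linarith
    have hyk0 : y k0 = 0 := by
      have h2 : ∑ k, y k * z k = y k0 * z k0 :=
        Finset.sum_eq_single k0 (fun k _ hk => by rw [hzk k hk, mul_zero])
          (fun h => absurd (Finset.mem_univ k0) h)
      have h3 : y k0 * z k0 = 0 := by rw [← h2]; exact hyz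
      rcases mul_eq_zero.mp h3 with h | h
      · exact h
      · exact absurd h hk0
    have hyypos : 0 < y ⬝ᵥ y := hyy ▸ hxxpos
    have hex1 : ∃ k1, y k1 ≠ 0 := by
      by_contra h; push_neg at h
      have : y ⬝ᵥ y = 0 := by
        have : ∀ k, y k * y k = 0 := fun k => by rw [h k, mul_zero]
        exact Finset.sum_eq_zero fun k _ => this k
      linarith
    obtain ⟨k1, hk1⟩ := hex1
    have hk1ne : k1 ≠ k0 := fun h => hk1 (h ▸ hyk0)
    have hlt : ∑ k, hM.eigenvalues k * (y k) ^ 2 < ∑ k, R * (y k) ^ 2 := by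
      apply Finset.sum_lt_sum
      · intro k _
        by_cases hk : k = k0
        · subst hk; rw [hyk0]; simp
        · exact mul_le_mul_of_nonneg_right (hcon k hk).le (sq_nonneg _)
      · exact ⟨k1, Finset.mem_univ _,
          mul_lt_mul_of_pos_right (hcon k1 hk1ne) (by positivity)⟩
    have hsum : ∑ k, R * (y k) ^ 2 = R * (x ⬝ᵥ x) := by
      rw [← hyy]
      show _ = R * ∑ k, y k * y k
      rw [Finset.mul_sum]
      exact Finset.sum_congr rfl fun k _ => by ring
    rw [hxMxspec, ← hsum] at hxMx
    linarith
  obtain ⟨k1, hk1ne, hk1R⟩ := hex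
  have h0R : R ≤ hM.eigenvalues k0 := by rw [hk0d]; exact hRd
  exact two_eigs_le_lambda2 M hM R k0 k1 (Ne.symm hk1ne) h0R hk1R
end

section
/- Let G be a connected n-vertex d-regular multigraph with a cut-vertex v, and suppose the vertex set of G − v is partitioned into nonempty sets S₁ and S₂ of sizes s₁ and s₂ = n − 1 − s₁ respectively, each a union of connected components of G − v. Then λ2(G) ≥ d − dn/(n − 1 + 4·s₁·s₂). -/
open Matrix Finset BigOperators

section Helpers

open Polynomial in

-- conjugation invariance of charpoly
lemma my_charpoly_conj {n : Type*} [DecidableEq n] [Fintype n] {R : Type*} [CommRing R]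
    (U D V : Matrix n n R) (hUV : U * V = 1) :
    (U * D * V).charpoly = D.charpoly := by
  have hC : U.map C * V.map C = 1 := by
    rw [← Matrix.map_mul, hUV, Matrix.map_one _ (map_zero C) (map_one C)]
  have h1 : charmatrix (U * D * V) = U.map C * charmatrix D * V.map C := by
    unfold charmatrix
    rw [mul_sub, sub_mul]
    congr 1
    · have hc := (Matrix.scalar_commute (X : R[X]) (fun r' => Commute.all _ _) (U.map C)).eq
      rw [← hc, mul_assoc, hC, mul_one]
    · simp only [RingHom.mapMatrix_apply, ← Matrix.map_mul]
  rw [Matrix.charpoly, Matrix.charpoly, h1, det_mul, det_mul]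
  have : (U.map C).det * (V.map C).det = 1 := by rw [← det_mul, hC, det_one]
  calc (U.map C).det * (charmatrix D).det * (V.map C).det
      = (charmatrix D).det * ((U.map C).det * (V.map C).det) := by ring
    _ = (charmatrix D).det := by rw [this, mul_one]

open Polynomial in
lemma my_charpoly_diagonal {n : Type*} [DecidableEq n] [Fintype n] {R : Type*} [CommRing R]
    (v : n → R) : (Matrix.diagonal v).charpoly = ∏ i, (X - C (v i)) := by
  have : charmatrix (Matrix.diagonal v) = Matrix.diagonal (fun i => X - C (v i)) := by
    ext i j
    by_cases h : i = j
    · subst h; simp [charmatrix_apply_eq]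
    · simp [charmatrix_apply_ne _ _ _ h, Matrix.diagonal_apply_ne _ h]
  rw [Matrix.charpoly, this, det_diagonal]

open Polynomial in
lemma my_roots_charpoly {n : ℕ} (A : Matrix (Fin n) (Fin n) ℝ) (hA : A.IsHermitian) :
    A.charpoly.roots = Finset.univ.val.map hA.eigenvalues := by
  have hsp := hA.spectral_theorem
  have h1 : A.charpoly = (Matrix.diagonal ((RCLike.ofReal : ℝ → ℝ) ∘ hA.eigenvalues)).charpoly := by
    conv_lhs => rw [hsp]
    exact my_charpoly_conj _ _ _ (Matrix.mem_unitaryGroup_iff.mp (hA.eigenvectorUnitary).2)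
  have h2 : (RCLike.ofReal : ℝ → ℝ) ∘ hA.eigenvalues = hA.eigenvalues := by
    funext i; simp
  rw [h1, h2, my_charpoly_diagonal]
  have h3 : (∏ i, (X - C (hA.eigenvalues i))) =
      ((Finset.univ.val.map hA.eigenvalues).map fun a => X - C a).prod := by
    simp [Multiset.map_map, Finset.prod, Function.comp_def]
  rw [h3, Polynomial.roots_multiset_prod_X_sub_C]

lemma my_sorted_getD {c : ℝ} {L : List ℝ} (hL : L.Pairwise (· ≤ ·))
    (h2 : 2 ≤ (L.filter (fun b => decide (c ≤ b))).length) :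
    c ≤ L.getD (L.length - 2) 0 := by
  classical
  set q : ℝ → Bool := fun b => decide (b < c) with hq
  have hst : L.takeWhile q ++ L.dropWhile q = L := List.takeWhile_append_dropWhile
  set s := L.takeWhile q with hs
  set t := L.dropWhile q with ht
  have hsfil : s.filter (fun b => decide (c ≤ b)) = [] := by
    rw [List.filter_eq_nil_iff]
    intro a ha
    have := List.mem_takeWhile_imp ha
    simp only [hq, decide_eq_true_eq] at this
    simpa using not_le.mpr this
  have hfil : (L.filter (fun b => decide (c ≤ b))).length ≤ t.length := by
    calc (L.filter (fun b => decide (c ≤ b))).length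
        = ((s ++ t).filter (fun b => decide (c ≤ b))).length := by rw [hst]
      _ = (t.filter (fun b => decide (c ≤ b))).length := by
          rw [List.filter_append, hsfil]; simp
      _ ≤ t.length := List.length_filter_le _ _
  have ht2 : 2 ≤ t.length := le_trans h2 hfil
  have htne : t ≠ [] := by intro h; rw [h] at ht2; simp at ht2
  have htsorted : t.Pairwise (· ≤ ·) := hL.sublist (List.dropWhile_sublist q)
  have hthead : c ≤ t.head htne := by
    have := List.head_dropWhile_not q (l := L) (by rw [← ht]; exact htne)
    have h' : q (t.head htne) = false := this
    simp only [hq, decide_eq_false_iff_not, not_lt] at h'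
    exact h'
  have htall : ∀ y ∈ t, c ≤ y := by
    intro y hy
    have hcons : t = t.head htne :: t.tail := (List.cons_head_tail htne).symm
    rw [hcons] at hy htsorted
    rcases List.mem_cons.mp hy with h | h
    · rw [h]; exact hthead
    · exact le_trans hthead ((List.pairwise_cons.mp htsorted).1 y h)
  have hlen : L.length = s.length + t.length := by rw [← hst, List.length_append]
  have hL2 : 2 ≤ L.length := by omega
  have hk : L.length - 2 < L.length := by omega
  have hks : s.length ≤ L.length - 2 := by omega
  rw [List.getD_eq_getElem L 0 hk]
  have hk2 : L.length - 2 < (s ++ t).length := by rw [hst]; exact hk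
  have hgoal : L[L.length - 2]'hk = (s ++ t)[L.length - 2]'hk2 := by
    congr 1 <;> rw [hst]
  rw [hgoal, List.getElem_append_right hks]
  exact htall _ (List.getElem_mem _)

local notation "⟪" x ", " y "⟫" => @inner ℝ _ _ x y

lemma my_lambda2_ge {n : ℕ} (A : Matrix (Fin n) (Fin n) ℝ) (hA : A.IsHermitian)
    {d : ℝ} (hrow : A *ᵥ (fun _ => (1:ℝ)) = fun _ => d)
    {x : Fin n → ℝ} (hx : x ≠ 0) (hxsum : ∑ i, x i = 0)
    {r : ℝ} (hrd : r ≤ d)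
    (hray : r * (∑ i, x i * x i) ≤ ∑ i, x i * (A *ᵥ x) i) :
    r ≤ lambda2 A := by
  classical
  set e : (Fin n → ℝ) ≃ EuclideanSpace ℝ (Fin n) := (WithLp.equiv 2 (Fin n → ℝ)).symm with he
  set B := hA.eigenvectorBasis with hB
  set lam := hA.eigenvalues with hlam
  -- inner product in coordinates
  have hinner : ∀ u y : Fin n → ℝ, ⟪e u, e y⟫ = ∑ i, u i * y i := by
    intro u y
    simp [he, PiLp.inner_apply, RCLike.inner_apply]
    exact Finset.sum_congr rfl fun i _ => mul_comm _ _
  -- symmetry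
  have hsymm : ∀ u y : Fin n → ℝ, ⟪e (A *ᵥ u), e y⟫ = ⟪e u, e (A *ᵥ y)⟫ := by
    intro u y
    rw [hinner, hinner]
    simp only [mulVec, dotProduct]
    have hAs : ∀ i j, A j i = A i j := by
      intro i j
      have := congrFun (congrFun hA i) j
      simpa [Matrix.conjTranspose_apply] using this
    calc ∑ i, (∑ j, A i j * u j) * y i
        = ∑ i, ∑ j, A i j * u j * y i := by
          exact Finset.sum_congr rfl fun i _ => Finset.sum_mul _ _ _
      _ = ∑ j, ∑ i, A i j * u j * y i := Finset.sum_comm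
      _ = ∑ j, u j * ∑ i, A j i * y i := by
          refine Finset.sum_congr rfl fun j _ => ?_
          rw [Finset.mul_sum]
          refine Finset.sum_congr rfl fun i _ => ?_
          rw [hAs i j]; ring
  -- coefficients
  set c : Fin n → ℝ := fun i => B.repr (e x) i with hc
  set w : Fin n → ℝ := fun _ => 1 with hw
  set b : Fin n → ℝ := fun i => B.repr (e w) i with hb
  have hrepr : ∀ (y : Fin n → ℝ) (i : Fin n), B.repr (e y) i = ⟪B i, e y⟫ :=
    fun y i => B.repr_apply_apply (e y) i
  -- eigen decomposition of quadratic form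
  have hBval : ∀ (y : Fin n → ℝ) i, ⟪B i, e (A *ᵥ y)⟫ = lam i * ⟪B i, e y⟫ := by
    intro y i
    have h1 : e ((B i : EuclideanSpace ℝ (Fin n)) : Fin n → ℝ) = B i := rfl
    have h2 : A *ᵥ ((B i : EuclideanSpace ℝ (Fin n)) : Fin n → ℝ) = lam i • ((B i : EuclideanSpace ℝ (Fin n)) : Fin n → ℝ) :=
      hA.mulVec_eigenvectorBasis i
    calc ⟪B i, e (A *ᵥ y)⟫ = ⟪e ((B i : EuclideanSpace ℝ (Fin n)) : Fin n → ℝ), e (A *ᵥ y)⟫ := by rw [h1]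
      _ = ⟪e (A *ᵥ ((B i : EuclideanSpace ℝ (Fin n)) : Fin n → ℝ)), e y⟫ := (hsymm _ _).symm
      _ = ⟪e (lam i • ((B i : EuclideanSpace ℝ (Fin n)) : Fin n → ℝ)), e y⟫ := by rw [h2]
      _ = lam i * ⟪B i, e y⟫ := by
          conv_rhs => rw [← h1]
          rw [hinner, hinner, Finset.mul_sum]
          refine Finset.sum_congr rfl fun k _ => ?_
          simp only [PiLp.smul_apply, Pi.smul_apply, smul_eq_mul]
          ring
  -- Parseval
  have hpars : ∀ u y : Fin n → ℝ,
      (inner ℝ (e u) (e y) : ℝ) = ∑ i, B.repr (e u) i * B.repr (e y) i := by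
    intro u y
    rw [← B.sum_inner_mul_inner (e u) (e y)]
    refine Finset.sum_congr rfl fun i _ => ?_
    rw [hrepr, hrepr, real_inner_comm]
  have hQ : ∑ i, x i * (A *ᵥ x) i = ∑ i, lam i * (c i * c i) := by
    rw [← hinner x (A *ᵥ x), hpars]
    refine Finset.sum_congr rfl fun i _ => ?_
    rw [hc]
    simp only []
    rw [hrepr x i, hrepr (A *ᵥ x) i, hBval x i]
    ring
  have hN : ∑ i, x i * x i = ∑ i, c i * c i := by
    rw [← hinner x x, hpars]
  have horth : ∑ i, b i * c i = 0 := by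
    have h2 : (inner ℝ (e w) (e x) : ℝ) = 0 := by
      rw [hinner]; simpa [hw] using hxsum
    rw [hpars] at h2
    simp only [hb, hc]
    exact h2
  have hbd : ∀ i, b i ≠ 0 → lam i = d := by
    intro i hbne
    have h2 : A *ᵥ w = d • w := by
      rw [hrow]; funext j; simp [hw]
    have h3 : B.repr (e (A *ᵥ w)) i = lam i * b i := by
      rw [hrepr, hBval, ← hrepr]
    have h4 : e (d • w) = d • e w := rfl
    have h5 : B.repr (e (A *ᵥ w)) i = d * b i := by
      rw [h2, h4, _root_.map_smul]
      simp [hb]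
    have := h3.symm.trans h5
    exact mul_right_cancel₀ hbne this
  obtain ⟨i₁, hci⟩ : ∃ i, c i ≠ 0 := by
    by_contra hall
    push_neg at hall
    apply hx
    funext j
    have hex : e x = 0 := by
      have : B.repr (e x) = 0 := by
        ext i
        simpa [hc] using hall i
      simpa using (B.repr.map_eq_zero_iff).mp this
    have : x j = (e x) j := rfl
    rw [this, hex, WithLp.ofLp_zero]
  obtain ⟨i₂, hbi⟩ : ∃ i, b i ≠ 0 := by
    by_contra hall
    push_neg at hall
    have hew : e w = 0 := by
      have : B.repr (e w) = 0 := by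
        ext i
        simpa [hb] using hall i
      simpa using (B.repr.map_eq_zero_iff).mp this
    have : w i₁ = (e w) i₁ := rfl
    rw [hew] at this
    simp [hw] at this
  classical
  set T : Finset (Fin n) := Finset.univ.filter (fun i => r ≤ lam i) with hT
  have hTcard : 2 ≤ T.card := by
    by_contra hlt
    push_neg at hlt
    have hbsupp : ∀ i, b i ≠ 0 → i ∈ T := by
      intro i hbne
      rw [hT, Finset.mem_filter]
      exact ⟨Finset.mem_univ _, by rw [hbd i hbne]; exact hrd⟩
    have hi₂T : i₂ ∈ T := hbsupp i₂ hbi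
    have hcard1 : T.card ≤ 1 := by omega
    have hT1 : T = {i₂} := by
      apply Finset.eq_singleton_iff_unique_mem.mpr
      exact ⟨hi₂T, fun x hx => Finset.card_le_one.mp hcard1 x hx i₂ hi₂T⟩
    have hbz : ∀ i, i ≠ i₂ → b i = 0 := by
      intro i hne
      by_contra hbne
      exact hne (by simpa [hT1] using hbsupp i hbne)
    have hcz : c i₂ = 0 := by
      have hsum : ∑ i, b i * c i = b i₂ * c i₂ :=
        Finset.sum_eq_single i₂ (fun i _ hne => by rw [hbz i hne]; ring) (by simp)
      rw [horth] at hsum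
      exact (mul_eq_zero.mp hsum.symm).resolve_left hbi
    have hi₁ne : i₁ ≠ i₂ := fun h => hci (h ▸ hcz)
    have hlam₁ : lam i₁ < r := by
      have : i₁ ∉ T := by rw [hT1]; simpa using hi₁ne
      rw [hT, Finset.mem_filter] at this
      push_neg at this
      exact this (Finset.mem_univ _)
    have hstrict : ∑ i, lam i * (c i * c i) < r * ∑ i, c i * c i := by
      rw [Finset.mul_sum]
      apply Finset.sum_lt_sum
      · intro i _
        by_cases hiT : i ∈ T
        · rw [hT1, Finset.mem_singleton] at hiT
          subst hiT
          rw [hcz]; simp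
        · have hlt' : lam i < r := by
            rw [hT, Finset.mem_filter] at hiT
            push_neg at hiT
            exact hiT (Finset.mem_univ _)
          exact mul_le_mul_of_nonneg_right (le_of_lt hlt') (mul_self_nonneg _)
      · exact ⟨i₁, Finset.mem_univ _,
          mul_lt_mul_of_pos_right hlam₁ (mul_self_pos.mpr hci)⟩
    rw [hQ, hN] at hray
    linarith
  -- conclude via sorted roots
  have hroots := my_roots_charpoly A hA
  have hsort : (eigList A).Pairwise (· ≤ ·) := Multiset.pairwise_sort _ _
  have hlenL : (eigList A).length = n := by
    rw [eigList, Multiset.length_sort, hroots]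
    simp
  have hcount : 2 ≤ ((eigList A).filter (fun bb => decide (r ≤ bb))).length := by
    have e1 : ((eigList A).filter (fun bb => decide (r ≤ bb))).length
        = Multiset.countP (fun bb => r ≤ bb) (↑(eigList A) : Multiset ℝ) := by
      rw [Multiset.coe_countP, List.countP_eq_length_filter]
    have e2 : (↑(eigList A) : Multiset ℝ) = A.charpoly.roots := Multiset.sort_eq _ _
    rw [e1, e2, hroots, Multiset.countP_map]
    have e3 : (Finset.univ.val.filter fun a => r ≤ lam a) = T.val := by
      rw [hT, Finset.filter_val]
    rw [e3]
    exact hTcard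
  have hfin := my_sorted_getD hsort hcount
  rw [hlenL] at hfin
  exact hfin

end Helpers

/-- for a connected n-vertex d-regular multigraph G with a
cut-vertex v, if the vertices of G − v are partitioned into nonempty sets S₁
and S₂ of sizes s₁ and s₂ = n − 1 − s₁, each a union of connected components
of G − v, then λ2(G) ≥ d − dn/(n − 1 + 4s₁s₂). -/
theorem stmt12 {n d : ℕ}
    (A : Matrix (Fin n) (Fin n) ℕ)
    (hsym : ∀ i j, A i j = A j i) (hdiag : ∀ i, A i i = 0)
    (hreg : ∀ i, ∑ j, A i j = d)
    (hconn : (toSimple A).Connected)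
    (v : Fin n)
    (hcut : ¬ ((toSimple A).induce ({v}ᶜ : Set (Fin n))).Connected)
    (S₁ S₂ : Finset (Fin n)) (h1 : S₁.Nonempty) (h2 : S₂.Nonempty)
    (hdisj : Disjoint S₁ S₂) (hunion : S₁ ∪ S₂ = ({v} : Finset (Fin n))ᶜ)
    (hcomp : ∀ i ∈ S₁, ∀ j ∈ S₂, A i j = 0)
    (s₁ s₂ : ℕ) (hs₁ : s₁ = S₁.card) (hs₂ : s₂ = S₂.card)
    (hs₂' : s₂ = n - 1 - s₁) :
    (d : ℝ) - (d : ℝ) * (n : ℝ) / ((n : ℝ) - 1 + 4 * (s₁ : ℝ) * (s₂ : ℝ)) ≤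
      lambda2 (A.map (fun x => (x : ℝ))) := by
  classical
  set A' : Matrix (Fin n) (Fin n) ℝ := A.map (fun x => (x : ℝ)) with hA'
  -- membership facts
  have hvn1 : v ∉ S₁ := by
    intro h
    have hm : v ∈ S₁ ∪ S₂ := Finset.mem_union_left _ h
    rw [hunion, Finset.mem_compl] at hm
    exact hm (Finset.mem_singleton_self v)
  have hvn2 : v ∉ S₂ := by
    intro h
    have hm : v ∈ S₁ ∪ S₂ := Finset.mem_union_right _ h
    rw [hunion, Finset.mem_compl] at hm
    exact hm (Finset.mem_singleton_self v)
  have hS12 : ∀ i ∈ S₂, i ∉ S₁ := fun i hi => Finset.disjoint_right.mp hdisj hi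
  -- splitting sums
  have huniv : (Finset.univ : Finset (Fin n)) = insert v (S₁ ∪ S₂) := by
    ext i
    simp only [Finset.mem_univ, true_iff, Finset.mem_insert]
    by_cases h : i = v
    · left; exact h
    · right; rw [hunion]; simp [h]
  have hvnu : v ∉ S₁ ∪ S₂ := by rw [hunion]; simp
  have hsplit : ∀ f : Fin n → ℝ, ∑ i, f i = (∑ i ∈ S₁, f i) + (∑ i ∈ S₂, f i) + f v := by
    intro f
    rw [huniv, Finset.sum_insert hvnu, Finset.sum_union hdisj]
    ring
  -- cards
  have hn1 : 1 ≤ n := (Fin.pos v)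
  have hcard : s₁ + s₂ + 1 = n := by
    have hcu : (S₁ ∪ S₂).card = S₁.card + S₂.card := Finset.card_union_of_disjoint hdisj
    rw [hunion, Finset.card_compl, Finset.card_singleton, Fintype.card_fin] at hcu
    omega
  have hcardR : (n : ℝ) = (s₁ : ℝ) + (s₂ : ℝ) + 1 := by exact_mod_cast hcard.symm
  have hs1pos : 1 ≤ s₁ := by rw [hs₁]; exact Finset.card_pos.mpr h1
  have hs2pos : 1 ≤ s₂ := by rw [hs₂]; exact Finset.card_pos.mpr h2
  have hs1R : (1:ℝ) ≤ (s₁:ℝ) := by exact_mod_cast hs1pos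
  have hs2R : (1:ℝ) ≤ (s₂:ℝ) := by exact_mod_cast hs2pos
  set D : ℝ := (n : ℝ) - 1 + 4 * (s₁ : ℝ) * (s₂ : ℝ) with hD
  have hDpos : 0 < D := by rw [hD, hcardR]; nlinarith
  -- test vector
  set aa : ℝ := 2 * (s₂:ℝ) + 1 with haa
  set bb : ℝ := -(2 * (s₁:ℝ) + 1) with hbb
  set g : ℝ := (s₂:ℝ) - (s₁:ℝ) with hg
  set x : Fin n → ℝ := fun i => if i ∈ S₁ then aa else if i ∈ S₂ then bb else g with hxdef
  have hx1 : ∀ i ∈ S₁, x i = aa := fun i hi => by simp [hxdef, hi]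
  have hx2 : ∀ i ∈ S₂, x i = bb := fun i hi => by simp [hxdef, hS12 i hi, hi]
  have hxv : x v = g := by simp [hxdef, hvn1, hvn2]
  -- row sums
  have hrowcast : ∀ i, ∑ j, (A i j : ℝ) = (d:ℝ) := by
    intro i; exact_mod_cast congrArg (fun k : ℕ => (k:ℝ)) (hreg i)
  set t1 : ℝ := ∑ i ∈ S₁, (A i v : ℝ) with ht1
  set t2 : ℝ := ∑ i ∈ S₂, (A i v : ℝ) with ht2
  have hper1 : ∀ i ∈ S₁, ∑ j ∈ S₁, (A i j : ℝ) = (d:ℝ) - (A i v : ℝ) := by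
    intro i hi
    have hs := hrowcast i
    rw [hsplit (fun j => (A i j : ℝ))] at hs
    have hz : ∑ j ∈ S₂, (A i j : ℝ) = 0 :=
      Finset.sum_eq_zero fun j hj => by rw [hcomp i hi j hj]; simp
    rw [hz] at hs; linarith
  have hper2 : ∀ i ∈ S₂, ∑ j ∈ S₂, (A i j : ℝ) = (d:ℝ) - (A i v : ℝ) := by
    intro i hi
    have hs := hrowcast i
    rw [hsplit (fun j => (A i j : ℝ))] at hs
    have hz : ∑ j ∈ S₁, (A i j : ℝ) = 0 :=
      Finset.sum_eq_zero fun j hj => by rw [hsym i j, hcomp j hj i hi]; simp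
    rw [hz] at hs; linarith
  have ht12 : t1 + t2 = (d:ℝ) := by
    have hs := hrowcast v
    rw [hsplit (fun j => (A v j : ℝ))] at hs
    have hvv : ((A v v : ℕ) : ℝ) = 0 := by rw [hdiag]; simp
    have e1 : ∑ j ∈ S₁, (A v j : ℝ) = t1 := by
      rw [ht1]; exact Finset.sum_congr rfl fun j _ => by rw [hsym v j]
    have e2 : ∑ j ∈ S₂, (A v j : ℝ) = t2 := by
      rw [ht2]; exact Finset.sum_congr rfl fun j _ => by rw [hsym v j]
    rw [e1, e2, hvv] at hs; linarith
  -- norm of x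
  have hSx2 : ∑ i, x i * x i = (s₁:ℝ) * (aa * aa) + (s₂:ℝ) * (bb * bb) + g * g := by
    rw [hsplit (fun i => x i * x i)]
    have e1 : ∑ i ∈ S₁, x i * x i = (s₁:ℝ) * (aa * aa) := by
      rw [Finset.sum_congr rfl fun i hi => by rw [hx1 i hi], Finset.sum_const, nsmul_eq_mul, hs₁]
    have e2 : ∑ i ∈ S₂, x i * x i = (s₂:ℝ) * (bb * bb) := by
      rw [Finset.sum_congr rfl fun i hi => by rw [hx2 i hi], Finset.sum_const, nsmul_eq_mul, hs₂]
    rw [e1, e2, hxv]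
  -- sum of x
  have hxsum : ∑ i, x i = 0 := by
    rw [hsplit x]
    have e1 : ∑ i ∈ S₁, x i = (s₁:ℝ) * aa := by
      rw [Finset.sum_congr rfl hx1, Finset.sum_const, nsmul_eq_mul, hs₁]
    have e2 : ∑ i ∈ S₂, x i = (s₂:ℝ) * bb := by
      rw [Finset.sum_congr rfl hx2, Finset.sum_const, nsmul_eq_mul, hs₂]
    rw [e1, e2, hxv, haa, hbb, hg]; ring
  -- quadratic form
  have hmv : ∀ i, (A' *ᵥ x) i = ∑ j, (A i j : ℝ) * x j := by
    intro i; simp [hA', Matrix.mulVec, dotProduct, Matrix.map_apply]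
  have hF1 : ∀ i ∈ S₁, (A' *ᵥ x) i = aa * ((d:ℝ) - (A i v : ℝ)) + (A i v : ℝ) * g := by
    intro i hi
    rw [hmv i, hsplit (fun j => (A i j : ℝ) * x j)]
    have e1 : ∑ j ∈ S₁, (A i j : ℝ) * x j = aa * ((d:ℝ) - (A i v : ℝ)) := by
      rw [Finset.sum_congr rfl fun j hj => by rw [hx1 j hj], ← Finset.sum_mul, hper1 i hi]; ring
    have e2 : ∑ j ∈ S₂, (A i j : ℝ) * x j = 0 :=
      Finset.sum_eq_zero fun j hj => by rw [hcomp i hi j hj]; simp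
    rw [e1, e2, hxv]; ring
  have hF2 : ∀ i ∈ S₂, (A' *ᵥ x) i = bb * ((d:ℝ) - (A i v : ℝ)) + (A i v : ℝ) * g := by
    intro i hi
    rw [hmv i, hsplit (fun j => (A i j : ℝ) * x j)]
    have e1 : ∑ j ∈ S₂, (A i j : ℝ) * x j = bb * ((d:ℝ) - (A i v : ℝ)) := by
      rw [Finset.sum_congr rfl fun j hj => by rw [hx2 j hj], ← Finset.sum_mul, hper2 i hi]; ring
    have e2 : ∑ j ∈ S₁, (A i j : ℝ) * x j = 0 :=
      Finset.sum_eq_zero fun j hj => by rw [hsym i j, hcomp j hj i hi]; simp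
    rw [e1, e2, hxv]; ring
  have hFv : (A' *ᵥ x) v = aa * t1 + bb * t2 := by
    rw [hmv v, hsplit (fun j => (A v j : ℝ) * x j)]
    have e1 : ∑ j ∈ S₁, (A v j : ℝ) * x j = aa * t1 := by
      rw [ht1, Finset.mul_sum]
      exact Finset.sum_congr rfl fun j hj => by rw [hx1 j hj, hsym v j]; ring
    have e2 : ∑ j ∈ S₂, (A v j : ℝ) * x j = bb * t2 := by
      rw [ht2, Finset.mul_sum]
      exact Finset.sum_congr rfl fun j hj => by rw [hx2 j hj, hsym v j]; ring
    have hvv : ((A v v : ℕ) : ℝ) = 0 := by rw [hdiag]; simp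
    rw [e1, e2, hvv, hxv]; ring
  have hQ : ∑ i, x i * (A' *ᵥ x) i
      = aa * (aa * ((d:ℝ) * (s₁:ℝ) - t1) + g * t1)
        + bb * (bb * ((d:ℝ) * (s₂:ℝ) - t2) + g * t2)
        + g * (aa * t1 + bb * t2) := by
    rw [hsplit (fun i => x i * (A' *ᵥ x) i)]
    have e1 : ∑ i ∈ S₁, x i * (A' *ᵥ x) i
        = aa * (aa * ((d:ℝ) * (s₁:ℝ) - t1) + g * t1) := by
      calc ∑ i ∈ S₁, x i * (A' *ᵥ x) i
          = ∑ i ∈ S₁, (aa * aa * (d:ℝ) + aa * (g - aa) * (A i v : ℝ)) := by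
            refine Finset.sum_congr rfl fun i hi => ?_
            rw [hx1 i hi, hF1 i hi]; ring
        _ = (s₁:ℝ) * (aa * aa * (d:ℝ)) + aa * (g - aa) * t1 := by
            rw [Finset.sum_add_distrib, Finset.sum_const, ← Finset.mul_sum, nsmul_eq_mul,
              hs₁, ht1]
        _ = aa * (aa * ((d:ℝ) * (s₁:ℝ) - t1) + g * t1) := by ring
    have e2 : ∑ i ∈ S₂, x i * (A' *ᵥ x) i
        = bb * (bb * ((d:ℝ) * (s₂:ℝ) - t2) + g * t2) := by
      calc ∑ i ∈ S₂, x i * (A' *ᵥ x) i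
          = ∑ i ∈ S₂, (bb * bb * (d:ℝ) + bb * (g - bb) * (A i v : ℝ)) := by
            refine Finset.sum_congr rfl fun i hi => ?_
            rw [hx2 i hi, hF2 i hi]; ring
        _ = (s₂:ℝ) * (bb * bb * (d:ℝ)) + bb * (g - bb) * t2 := by
            rw [Finset.sum_add_distrib, Finset.sum_const, ← Finset.mul_sum, nsmul_eq_mul,
              hs₂, ht2]
        _ = bb * (bb * ((d:ℝ) * (s₂:ℝ) - t2) + g * t2) := by ring
    rw [e1, e2, hxv, hFv]
  -- Hermitian and row sums for A'
  have hAh : A'.IsHermitian := by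
    apply Matrix.IsHermitian.ext
    intro i j
    simp only [hA', Matrix.conjTranspose_apply, Matrix.map_apply, star_trivial]
    rw [hsym j i]
  have hrow : A' *ᵥ (fun _ => (1:ℝ)) = fun _ => (d:ℝ) := by
    funext i
    simp only [hA', Matrix.mulVec, dotProduct, Matrix.map_apply, mul_one]
    exact hrowcast i
  -- x nonzero
  obtain ⟨i₁, hi₁⟩ := h1
  have hxne : x ≠ 0 := by
    intro h0
    have hv : x i₁ = 0 := congrFun h0 i₁
    rw [hx1 i₁ hi₁, haa] at hv
    nlinarith
  -- r ≤ d
  set r : ℝ := (d:ℝ) - (d:ℝ) * (n:ℝ) / D with hr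
  have hrd : r ≤ (d:ℝ) := by
    rw [hr]
    have : 0 ≤ (d:ℝ) * (n:ℝ) / D :=
      div_nonneg (mul_nonneg (Nat.cast_nonneg _) (Nat.cast_nonneg _)) (le_of_lt hDpos)
    linarith
  -- Rayleigh equality
  have ht2eq : t2 = (d:ℝ) - t1 := by linarith
  have hray : r * (∑ i, x i * x i) ≤ ∑ i, x i * (A' *ᵥ x) i := by
    have hDne : (s₁:ℝ) + s₁ * s₂ * 4 + s₂ ≠ 0 := ne_of_gt (by nlinarith)
    apply le_of_eq
    rw [hSx2, hQ, hr, ht2eq, haa, hbb, hg, hD, hcardR]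
    field_simp
    ring_nf
    field_simp
    ring
  exact my_lambda2_ge A' hAh hrow hxne hxsum hrd hray
end
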